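/- arXiv:2003.07532 — 4 statements merged into one kernel-verified Lean document; each statement's English description precedes it below -/
import Mathlib

section
/- For a square complex matrix A and real (or complex) t with |t| < 1, the matrix binomial series ∑_{k=0}^∞ (A)_k t^k / k! converges to (1-t)^{-A}, where (1-t)^{-A} = exp(-A log(1-t)). -/
open Matrix Complex Finset

/-- Matrix Pochhammer symbol: `(A)_0 = I`, `(A)_{n+1} = (A)_n (A + nI)`. -/
noncomputable def poch {r : ℕ} (A : Matrix (Fin r) (Fin r) ℂ) : ℕ → Matrix (Fin r) (Fin r) ℂ
  | 0 => 1
  | n + 1 => poch A n * (A + (n : ℂ) • 1)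

open NormedSpace Filter Polynomial

/-- Pochhammer symbol in a general algebra. -/
noncomputable def apoch {𝔸 : Type*} [Ring 𝔸] [Algebra ℂ 𝔸] (A : 𝔸) : ℕ → 𝔸
  | 0 => 1
  | n + 1 => apoch A n * (A + (n : ℂ) • 1)

section Aux

lemma binom_tendsto_aux {a : ℝ} :
    Tendsto (fun k : ℕ => (a + k) / (k + 1)) atTop (nhds 1) := by
  have h0 : Tendsto (fun k : ℕ => (a - 1) * (1 / (k + 1 : ℝ)) + 1) atTop (nhds 1) := by
    have := (tendsto_one_div_add_atTop_nhds_zero_nat).const_mul (a - 1)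
    simpa using this.add (tendsto_const_nhds (x := (1:ℝ)))
  refine h0.congr (fun k => ?_)
  have hk : (k : ℝ) + 1 ≠ 0 := by positivity
  field_simp
  ring

lemma binom_summable_aux {a x : ℝ} (ha : 0 < a) (hx0 : 0 < x) (hx : x < 1) :
    Summable (fun k : ℕ => (ascPochhammer ℝ k).eval a * x ^ k / k.factorial) := by
  apply summable_of_ratio_test_tendsto_lt_one hx
  · filter_upwards with k
    have h1 := ascPochhammer_pos k a ha
    have h2 : (0:ℝ) < (k.factorial : ℝ) := by positivity
    positivity
  · have key : ∀ k : ℕ,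
        ‖(ascPochhammer ℝ (k+1)).eval a * x ^ (k+1) / (k+1).factorial‖ /
          ‖(ascPochhammer ℝ k).eval a * x ^ k / k.factorial‖ = x * ((a + k) / (k + 1)) := by
      intro k
      have hp := ascPochhammer_pos k a ha
      have hp1 := ascPochhammer_pos (k+1) a ha
      have hf : (0:ℝ) < (k.factorial : ℝ) := by positivity
      have hpa : (0:ℝ) < a + k := by positivity
      rw [Real.norm_of_nonneg (by positivity), Real.norm_of_nonneg (by positivity),
        ascPochhammer_succ_eval, Nat.factorial_succ]
      push_cast
      have hkk : ((k:ℝ) + 1) ≠ 0 := by positivity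
      field_simp
      ring
    have := tendsto_const_nhds (x := x) |>.mul (binom_tendsto_aux (a := a))
    rw [mul_one] at this
    exact this.congr (fun k => (key k).symm)

lemma ascPochhammer_eval_succ_left (a : ℝ) (k : ℕ) :
    (ascPochhammer ℝ (k+1)).eval a = a * (ascPochhammer ℝ k).eval (a + 1) := by
  rw [ascPochhammer_succ_left]
  simp [Polynomial.eval_comp]

lemma binom_summable_aux2 {a x : ℝ} (ha : 0 < a) (hx0 : 0 < x) (hx : x < 1) :
    Summable (fun k : ℕ => (ascPochhammer ℝ k).eval a * (k * x ^ (k - 1)) / k.factorial) := by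
  rw [← summable_nat_add_iff 1]
  have heq : (fun k : ℕ =>
      (ascPochhammer ℝ (k+1)).eval a * ((k+1 : ℕ) * x ^ (k + 1 - 1)) / (k+1).factorial)
      = fun k : ℕ => a * ((ascPochhammer ℝ k).eval (a + 1) * x ^ k / k.factorial) := by
    funext k
    have hf : ((k.factorial : ℝ)) ≠ 0 := by positivity
    have hk1 : ((k : ℝ) + 1) ≠ 0 := by positivity
    rw [ascPochhammer_eval_succ_left, Nat.factorial_succ, Nat.add_sub_cancel]
    push_cast
    field_simp
  rw [heq]
  exact ((binom_summable_aux (by linarith) hx0 hx)).mul_left a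

variable {𝔸 : Type*} [NormedRing 𝔸] [NormedAlgebra ℂ 𝔸] [NormOneClass 𝔸] [CompleteSpace 𝔸]

lemma commute_apoch (A : 𝔸) (k : ℕ) : Commute A (apoch A k) := by
  induction k with
  | zero => exact Commute.one_right A
  | succ n ih =>
      exact ih.mul_right ((Commute.refl A).add_right ((Commute.one_right A).smul_right _))

lemma norm_apoch_le (A : 𝔸) (k : ℕ) :
    ‖apoch A k‖ ≤ (ascPochhammer ℝ k).eval (‖A‖ + 1) := by
  induction k with
  | zero => simp [apoch]
  | succ n ih =>
    rw [ascPochhammer_succ_eval]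
    calc ‖apoch A n * (A + (n:ℂ) • 1)‖ ≤ ‖apoch A n‖ * ‖A + (n:ℂ) • 1‖ := norm_mul_le _ _
    _ ≤ (ascPochhammer ℝ n).eval (‖A‖ + 1) * ((‖A‖ + 1) + n) := by
        apply mul_le_mul ih ?_ (norm_nonneg _)
          (le_of_lt (ascPochhammer_pos n _ (by positivity)))
        calc ‖A + (n:ℂ) • (1:𝔸)‖ ≤ ‖A‖ + ‖(n:ℂ) • (1:𝔸)‖ := norm_add_le _ _
        _ ≤ ‖A‖ + 1 + n := by
            rw [norm_smul, norm_one, mul_one, Complex.norm_natCast]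
            linarith


lemma apoch_key (A : 𝔸) (z : ℂ) (k : ℕ) :
    (((k + 1).factorial : ℂ)⁻¹ * ((k + 1 : ℂ) * z ^ k)) • apoch A (k + 1)
      = ((k.factorial : ℂ)⁻¹ * z ^ k) • apoch A k * A
        + z • (((k.factorial : ℂ)⁻¹ * ((k : ℂ) * z ^ (k - 1))) • apoch A k) := by
  have hfact : ((k + 1).factorial : ℂ) = ((k : ℂ) + 1) * (k.factorial : ℂ) := by
    rw [Nat.factorial_succ]; push_cast; ring
  have hk1 : ((k : ℂ) + 1) ≠ 0 := Nat.cast_add_one_ne_zero k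
  have hkf : ((k.factorial : ℂ)) ≠ 0 := Nat.cast_ne_zero.mpr k.factorial_ne_zero
  have hzz : (z : ℂ) * ((k : ℂ) * z ^ (k - 1)) = (k : ℂ) * z ^ k := by
    cases k with
    | zero => simp
    | succ n => rw [Nat.add_sub_cancel]; ring
  have hA : apoch A (k + 1) = apoch A k * (A + (k : ℂ) • 1) := rfl
  have h1 : ((k : ℂ) + 1)⁻¹ * ((k.factorial : ℂ))⁻¹ * (((k : ℂ) + 1) * z ^ k)
      = ((k.factorial : ℂ))⁻¹ * z ^ k := by
    rw [mul_comm (((k : ℂ) + 1)⁻¹) (((k.factorial : ℂ))⁻¹), mul_assoc,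
      inv_mul_cancel_left₀ hk1]
  have h2 : ((k : ℂ) + 1)⁻¹ * ((k.factorial : ℂ))⁻¹ * (((k : ℂ) + 1) * z ^ k) * (k : ℂ)
      = z * (((k.factorial : ℂ))⁻¹ * ((k : ℂ) * z ^ (k - 1))) := by
    rw [h1, mul_left_comm z (((k.factorial : ℂ))⁻¹), hzz]
    ring
  rw [hA, hfact, mul_inv, mul_add, mul_smul_comm, mul_one, smul_mul_assoc, smul_add,
    smul_smul, smul_smul, h2, h1]

set_option maxHeartbeats 1000000 in
/-- Binomial theorem for a complete normed `ℂ`-algebra. -/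
theorem binom_master (A : 𝔸) (t : ℂ) (ht : ‖t‖ < 1) :
    HasSum (fun k : ℕ => ((k.factorial : ℂ)⁻¹ * t ^ k) • apoch A k)
      (exp ((-(Complex.log (1 - t))) • A)) := by
  set a : ℝ := ‖A‖ + 1 with ha_def
  have ha : 0 < a := by positivity
  set ρ : ℝ := (‖t‖ + 1) / 2 with hρ_def
  have hρ0 : 0 < ρ := by positivity
  have hρ1 : ρ < 1 := by rw [hρ_def]; linarith
  have htρ : ‖t‖ < ρ := by rw [hρ_def]; linarith
  set s : Set ℂ := Metric.ball (0 : ℂ) ρ with hs_def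
  have hs_open : IsOpen s := Metric.isOpen_ball
  have hs_conn : IsPreconnected s := (convex_ball (0:ℂ) ρ).isPreconnected
  have hts : t ∈ s := by simpa [hs_def, mem_ball_zero_iff] using htρ
  have h0s : (0:ℂ) ∈ s := by simpa [hs_def, mem_ball_zero_iff] using hρ0
  set f : ℕ → ℂ → 𝔸 := fun k z => ((k.factorial : ℂ)⁻¹ * z ^ k) • apoch A k with hf_def
  set f' : ℕ → ℂ → 𝔸 :=
    fun k z => ((k.factorial : ℂ)⁻¹ * (k * z ^ (k - 1))) • apoch A k with hf'_def
  set u : ℕ → ℝ :=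
    fun k => (ascPochhammer ℝ k).eval a * (k * ρ ^ (k - 1)) / k.factorial with hu_def
  have hu : Summable u := binom_summable_aux2 ha hρ0 hρ1
  have hderiv : ∀ (k : ℕ) (z : ℂ), HasDerivAt (f k) (f' k z) z := by
    intro k z
    exact ((hasDerivAt_pow k z).const_mul ((k.factorial : ℂ)⁻¹)).smul_const (apoch A k)
  have hnorm : ∀ (k : ℕ) (z : ℂ), ‖z‖ ≤ ρ →
      ‖f' k z‖ ≤ u k := by
    intro k z hz
    have hzpow : ‖z‖ ^ (k - 1) ≤ ρ ^ (k - 1) := pow_le_pow_left₀ (norm_nonneg _) hz _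
    have h1 : ‖f' k z‖ = (k.factorial : ℝ)⁻¹ * (k * ‖z‖ ^ (k - 1)) * ‖apoch A k‖ := by
      rw [hf'_def, norm_smul, norm_mul, norm_mul, norm_inv, norm_pow,
        Complex.norm_natCast, Complex.norm_natCast]
    rw [h1, hu_def]
    have hP := norm_apoch_le A k
    have hPpos := (ascPochhammer_pos k a ha).le
    have hfk : (0:ℝ) < (k.factorial : ℝ) := by positivity
    calc (k.factorial : ℝ)⁻¹ * (k * ‖z‖ ^ (k - 1)) * ‖apoch A k‖
        ≤ (k.factorial : ℝ)⁻¹ * (k * ρ ^ (k - 1)) * (ascPochhammer ℝ k).eval a := by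
          apply mul_le_mul _ hP (norm_nonneg _)
          · positivity
          · apply mul_le_mul_of_nonneg_left _ (by positivity)
            exact mul_le_mul_of_nonneg_left hzpow (by positivity)
      _ = (ascPochhammer ℝ k).eval a * (k * ρ ^ (k - 1)) / k.factorial := by
          field_simp
  have hbound : ∀ (k : ℕ) (z : ℂ), z ∈ s → ‖f' k z‖ ≤ u k := by
    intro k z hz
    exact hnorm k z (le_of_lt (by simpa [hs_def, mem_ball_zero_iff] using hz))
  have hFsum : ∀ z : ℂ, ‖z‖ ≤ ρ → Summable (fun k => f k z) := by
    intro z hz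
    apply Summable.of_norm_bounded
      (g := fun k => (ascPochhammer ℝ k).eval a * ρ ^ k / k.factorial)
      (binom_summable_aux ha hρ0 hρ1)
    intro k
    have h1 : ‖f k z‖ = (k.factorial : ℝ)⁻¹ * ‖z‖ ^ k * ‖apoch A k‖ := by
      rw [hf_def, norm_smul, norm_mul, norm_inv, norm_pow, Complex.norm_natCast]
    rw [h1]
    have hP := norm_apoch_le A k
    have hfk : (0:ℝ) < (k.factorial : ℝ) := by positivity
    calc (k.factorial : ℝ)⁻¹ * ‖z‖ ^ k * ‖apoch A k‖
        ≤ (k.factorial : ℝ)⁻¹ * ρ ^ k * (ascPochhammer ℝ k).eval a := by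
          apply mul_le_mul _ hP (norm_nonneg _)
          · positivity
          · exact mul_le_mul_of_nonneg_left
              (pow_le_pow_left₀ (norm_nonneg _) hz _) (by positivity)
      _ = (ascPochhammer ℝ k).eval a * ρ ^ k / k.factorial := by field_simp
  set F : ℂ → 𝔸 := fun z => ∑' k, f k z with hF_def
  have hFderiv : ∀ z ∈ s, HasDerivAt F (∑' k, f' k z) z := by
    intro z hz
    exact hasDerivAt_tsum_of_isPreconnected hu hs_open hs_conn
      (fun k y _ => hderiv k y) hbound h0s (hFsum 0 (by simpa using hρ0.le)) hz
  have hFz : ∀ z ∈ s, HasSum (fun k => f k z) (F z) := by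
    intro z hz
    exact (hFsum z (le_of_lt (by simpa [hs_def, mem_ball_zero_iff] using hz))).hasSum
  -- commutation of F z with A
  have hcomm : ∀ z ∈ s, F z * A = A * F z := by
    intro z hz
    have h1 : HasSum (fun k => f k z * A) (F z * A) := (hFz z hz).mul_right A
    have h2 : HasSum (fun k => A * f k z) (A * F z) := (hFz z hz).mul_left A
    have h3 : (fun k => f k z * A) = fun k => A * f k z := by
      funext k
      rw [hf_def]
      rw [smul_mul_assoc, mul_smul_comm, (commute_apoch A k).eq]
    rw [h3] at h1
    exact h1.unique h2
  -- the ODE for F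
  have hODE : ∀ z ∈ s, (∑' k, f' k z) = (1 - z)⁻¹ • (F z * A) := by
    intro z hz
    have hz' : ‖z‖ < 1 := lt_trans (by simpa [hs_def, mem_ball_zero_iff] using hz) hρ1
    have h1z : (1 : ℂ) - z ≠ 0 := by
      intro h
      have : z = 1 := by linear_combination -h
      rw [this] at hz'; simp at hz'
    have hf'sum : Summable (fun k => f' k z) :=
      Summable.of_norm_bounded hu (fun k => hbound k z hz)
    set D : 𝔸 := ∑' k, f' k z with hD_def
    have hD : HasSum (fun k => f' k z) D := hf'sum.hasSum
    have h1 : HasSum (fun k => f' (k + 1) z) D := by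
      refine (hasSum_nat_add_iff (f := fun k => f' k z) 1).mpr ?_
      have : D + ∑ i ∈ Finset.range 1, f' i z = D := by
        simp [hf'_def]
      rw [this]
      exact hD
    have key : ∀ k : ℕ, f' (k + 1) z = f k z * A + z • f' k z := by
      intro k
      simp only [hf'_def, hf_def, Nat.add_sub_cancel]
      push_cast
      exact apoch_key A z k
    have h2' : HasSum (fun k => f' (k + 1) z) (F z * A + z • D) := by
      have hsum := ((hFz z hz).mul_right A).add (hD.const_smul z)
      have : (fun k => f k z * A + z • f' k z) = fun k => f' (k + 1) z := by
        funext k; rw [key k]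
      rwa [this] at hsum
    have hDeq : D = F z * A + z • D := h1.unique h2'
    have hsub : F z * A = (1 - z) • D := by
      rw [sub_smul, one_smul, eq_sub_iff_add_eq]
      exact hDeq.symm
    rw [hsub, smul_smul, inv_mul_cancel₀ h1z, one_smul]
  -- define g
  set g : ℂ → 𝔸 := fun z => exp (Complex.log (1 - z) • A) with hg_def
  have hgderiv : ∀ z ∈ s, HasDerivAt g ((-(1 - z)⁻¹) • (g z * A)) z := by
    intro z hz
    have hz' : ‖z‖ < 1 := lt_trans (by simpa [hs_def, mem_ball_zero_iff] using hz) hρ1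
    have hslit : (1 - z) ∈ Complex.slitPlane := by
      refine Or.inl ?_
      have : z.re < 1 := lt_of_le_of_lt (Complex.re_le_norm z) hz'
      simp only [Complex.sub_re, Complex.one_re]
      linarith
    have hlin : HasDerivAt (fun w : ℂ => 1 - w) (-1 : ℂ) z := by
      simpa using (hasDerivAt_id z).const_sub 1
    have hlog : HasDerivAt (fun w : ℂ => Complex.log (1 - w)) (-(1 - z)⁻¹) z := by
      have := (Complex.hasDerivAt_log hslit).comp z hlin
      rw [show (-(1 - z)⁻¹) = (1 - z)⁻¹ * (-1) by ring]
      exact this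
    have hexp := hasDerivAt_exp_smul_const (𝕂 := ℂ) A (Complex.log (1 - z))
    have := HasDerivAt.scomp z hexp hlog
    exact this
  -- H = g * F has zero derivative
  set H : ℂ → 𝔸 := fun z => g z * F z with hH_def
  have hHderiv : ∀ z ∈ s, HasDerivAt H 0 z := by
    intro z hz
    have h := (hgderiv z hz).mul (hFderiv z hz)
    have heq : (-(1 - z)⁻¹) • (g z * A) * F z + g z * (∑' k, f' k z) = 0 := by
      rw [hODE z hz, smul_mul_assoc, mul_smul_comm, mul_assoc, ← hcomm z hz, ← mul_assoc,
        neg_smul, neg_add_cancel]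
    rwa [heq] at h
  -- H is constant on s
  have hconst : H t = H 0 := by
    refine (convex_ball (0:ℂ) ρ).is_const_of_fderivWithin_eq_zero (𝕜 := ℂ)
      (fun z hz => ((hHderiv z hz).differentiableAt).differentiableWithinAt) ?_ hts h0s
    intro z hz
    rw [fderivWithin_of_isOpen hs_open hz]
    have := (hHderiv z hz).hasFDerivAt.fderiv
    rw [this]
    exact ContinuousLinearMap.ext fun v => by simp
  have hF0 : F 0 = 1 := by
    show (∑' k, f k 0) = 1
    rw [tsum_eq_single 0 (fun k hk => by simp [hf_def, zero_pow hk])]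
    simp [hf_def, apoch]
  have hg0 : g 0 = 1 := by
    show exp (Complex.log (1 - 0) • A) = 1
    rw [sub_zero, Complex.log_one, zero_smul, NormedSpace.exp_zero]
  have hgF : g t * F t = 1 := by
    have h0 : H 0 = (1 : 𝔸) := by
      have hh : H 0 = g 0 * F 0 := rfl
      rw [hh, hg0, hF0, one_mul]
    have ht2 : H t = g t * F t := rfl
    rw [← ht2, hconst, h0]
  -- conclude
  set l : ℂ := Complex.log (1 - t) with hl_def
  have hcomm2 : Commute ((-l) • A) (l • A) :=
    ((Commute.refl A).smul_left (-l)).smul_right l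
  have hinv : exp ((-l) • A) * g t = 1 := by
    show exp ((-l) • A) * exp (l • A) = 1
    rw [← NormedSpace.exp_add_of_commute_of_mem_ball (𝕂 := ℂ) hcomm2
      ((NormedSpace.expSeries_radius_eq_top ℂ 𝔸).symm ▸ edist_lt_top _ _)
      ((NormedSpace.expSeries_radius_eq_top ℂ 𝔸).symm ▸ edist_lt_top _ _)]
    rw [← add_smul, neg_add_cancel, zero_smul, NormedSpace.exp_zero]
  have hFt : F t = exp ((-l) • A) := by
    calc F t = 1 * F t := (one_mul _).symm
      _ = (exp ((-l) • A) * g t) * F t := by rw [hinv]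
      _ = exp ((-l) • A) * (g t * F t) := by rw [mul_assoc]
      _ = exp ((-l) • A) := by rw [hgF, mul_one]
  have := hFz t hts
  rwa [hFt] at this

end Aux

/-- Matrix binomial theorem: for |t| < 1,
∑_{k≥0} (A)_k t^k / k! = (1-t)^{-A} = exp(-log(1-t) · A). -/
theorem stmt_3 {r : ℕ} (A : Matrix (Fin r) (Fin r) ℂ) (t : ℂ) (ht : ‖t‖ < 1) :
    HasSum (fun k : ℕ => ((k.factorial : ℂ)⁻¹ * t ^ k) • poch A k)
      (NormedSpace.exp ((-(Complex.log (1 - t))) • A)) := by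
  rcases Nat.eq_zero_or_pos r with hr | hr
  · subst hr
    have h1 : (fun k : ℕ => ((k.factorial : ℂ)⁻¹ * t ^ k) • poch A k)
        = fun _ => (0 : Matrix (Fin 0) (Fin 0) ℂ) := funext fun _ => Subsingleton.elim _ _
    rw [h1, Subsingleton.elim (NormedSpace.exp ((-(Complex.log (1 - t))) • A))
      (0 : Matrix (Fin 0) (Fin 0) ℂ)]
    exact hasSum_zero
  · haveI : Nonempty (Fin r) := ⟨⟨0, hr⟩⟩
    letI : SeminormedRing (Matrix (Fin r) (Fin r) ℂ) := Matrix.linftyOpSemiNormedRing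
    letI : NormedRing (Matrix (Fin r) (Fin r) ℂ) := Matrix.linftyOpNormedRing
    letI : NormedAlgebra ℂ (Matrix (Fin r) (Fin r) ℂ) := Matrix.linftyOpNormedAlgebra
    letI : NormOneClass (Matrix (Fin r) (Fin r) ℂ) := Matrix.linfty_opNormOneClass
    have hpoch : ∀ k, poch A k = apoch A k := by
      intro k
      induction k with
      | zero => rfl
      | succ n ih => rw [poch, apoch, ih]
    have ht' : ‖t‖ < 1 := ht
    have := binom_master A t ht'
    simp only [hpoch]
    exact this
end

section
/- Let A, B ∈ ℂ^{r×r} and C ∈ ℂ^{r×r} with C + kI invertible for all integers k ≥ 0, and suppose A is invertible. Then for |x| < 1 the Gauss hypergeometric matrix function satisfies the contiguous relation: ₂F₁(A+I, B; C; x) = ₂F₁(A, B; C; x) + x · B · ₂F₁(A+I, B+I; C+I; x) · C^{-1}, provided AB = BA. -/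
open Matrix Complex Finset

variable {r : ℕ}

lemma poch_succ_left (A : Matrix (Fin r) (Fin r) ℂ) (n : ℕ) :
    poch A (n + 1) = A * poch (A + 1) n := by
  induction n with
  | zero => simp [poch]
  | succ n ih =>
    rw [poch, ih, poch, mul_assoc]
    congr 2
    push_cast
    rw [add_smul, one_smul]
    abel

lemma commute_poch {X A : Matrix (Fin r) (Fin r) ℂ} (h : Commute X A) (n : ℕ) :
    Commute X (poch A n) := by
  induction n with
  | zero => exact Commute.one_right X
  | succ n ih => exact ih.mul_right (h.add_right (Commute.smul_right (Commute.one_right X) _))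

lemma isUnit_poch {C : Matrix (Fin r) (Fin r) ℂ} (hC : ∀ k : ℕ, IsUnit (C + (k : ℂ) • 1))
    (n : ℕ) : IsUnit (poch C n) := by
  induction n with
  | zero => exact isUnit_one
  | succ n ih => exact ih.mul (hC n)

lemma poch_split (A : Matrix (Fin r) (Fin r) ℂ) (n : ℕ) :
    poch (A + 1) (n + 1) = poch A (n + 1) + ((n : ℂ) + 1) • poch (A + 1) n := by
  have hc : Commute A (poch (A + 1) n) :=
    commute_poch ((Commute.refl A).add_right (Commute.one_right A)) n
  rw [poch, poch_succ_left]
  have : A + 1 + (n : ℂ) • 1 = A + ((n : ℂ) + 1) • 1 := by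
    rw [add_smul, one_smul]; abel
  rw [this, mul_add, hc.eq, mul_smul_comm, mul_one, add_comm ((n:ℂ)) 1]

lemma key (A B C : Matrix (Fin r) (Fin r) ℂ) (hAB : A * B = B * A) (n : ℕ) :
    poch (A + 1) (n + 1) * poch B (n + 1) * (poch C (n + 1))⁻¹
      = poch A (n + 1) * poch B (n + 1) * (poch C (n + 1))⁻¹
        + ((n : ℂ) + 1) •
          (B * (poch (A + 1) n * poch (B + 1) n * (poch (C + 1) n)⁻¹) * C⁻¹) := by
  have hBA1 : Commute B (poch (A + 1) n) :=
    commute_poch (Commute.add_right (show Commute B A from hAB.symm) (Commute.one_right B)) n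
  rw [poch_split, add_mul, add_mul, smul_mul_assoc, smul_mul_assoc]
  congr 1
  congr 1
  rw [poch_succ_left B, poch_succ_left C, Matrix.mul_inv_rev]
  calc poch (A + 1) n * (B * poch (B + 1) n) * ((poch (C + 1) n)⁻¹ * C⁻¹)
      = (poch (A + 1) n * B) * poch (B + 1) n * (poch (C + 1) n)⁻¹ * C⁻¹ := by
        simp only [mul_assoc]
    _ = B * (poch (A + 1) n * poch (B + 1) n * (poch (C + 1) n)⁻¹) * C⁻¹ := by
        rw [← hBA1.eq]; simp only [mul_assoc]

open Filter in
lemma tendsto_ratio (c d : ℝ) :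
    Filter.Tendsto (fun n : ℕ => ((n : ℝ) + c) / ((n : ℝ) + d)) Filter.atTop (nhds 1) := by
  have hd : Tendsto (fun n : ℕ => (n : ℝ) + d) atTop atTop :=
    tendsto_atTop_add_const_right _ d tendsto_natCast_atTop_atTop
  have h0 : Tendsto (fun n : ℕ => (c - d) / ((n : ℝ) + d)) atTop (nhds 0) :=
    Tendsto.div_atTop tendsto_const_nhds hd
  have h1 : Tendsto (fun n : ℕ => 1 + (c - d) / ((n : ℝ) + d)) atTop (nhds 1) := by
    simpa using tendsto_const_nhds.add h0
  refine h1.congr' ?_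
  filter_upwards [hd.eventually_gt_atTop 0] with n hn
  have hne : (n : ℝ) + d ≠ 0 := ne_of_gt hn
  field_simp
  ring

open Filter in
lemma summable_term (hr : 0 < r) (A B C : Matrix (Fin r) (Fin r) ℂ)
    (hC : ∀ k : ℕ, IsUnit (C + (k : ℂ) • 1)) {x : ℂ} (hx : ‖x‖ < 1) :
    Summable (fun n : ℕ =>
      ((n.factorial : ℂ)⁻¹ * x ^ n) • (poch A n * poch B n * (poch C n)⁻¹)) := by
  haveI : Nonempty (Fin r) := Fin.pos_iff_nonempty.mp hr
  letI : NormedRing (Matrix (Fin r) (Fin r) ℂ) := Matrix.linftyOpNormedRing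
  letI : NormedAlgebra ℂ (Matrix (Fin r) (Fin r) ℂ) := Matrix.linftyOpNormedAlgebra
  rcases eq_or_ne x 0 with rfl | hx0
  · apply summable_of_ne_finset_zero (s := ({0} : Finset ℕ))
    intro n hn
    have h0 : (0 : ℂ) ^ n = 0 := zero_pow (by simpa using hn)
    simp [h0]
  set a : ℝ := ‖A‖ + 1 with ha
  set b : ℝ := ‖B‖ + 1 with hb
  set cnorm : ℕ → ℝ := fun k => ‖(C + (k : ℂ) • 1)⁻¹‖ with hcnorm
  set g : ℕ → ℝ := fun n => (n.factorial : ℝ)⁻¹ * ‖x‖ ^ n *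
      ∏ k ∈ Finset.range n, ((a + k) * (b + k) * cnorm k) with hg
  have hcnonneg : ∀ k, 0 ≤ cnorm k := fun k => norm_nonneg _
  have hgnonneg : ∀ n, 0 ≤ g n := by
    intro n
    apply mul_nonneg (mul_nonneg (by positivity) (by positivity))
    exact Finset.prod_nonneg fun k _ => mul_nonneg
      (mul_nonneg (by positivity) (by positivity)) (hcnonneg k)
  -- norm bounds on poch
  have hpoch : ∀ (M : Matrix (Fin r) (Fin r) ℂ) (n : ℕ),
      ‖poch M n‖ ≤ ∏ k ∈ Finset.range n, (‖M‖ + 1 + k) := by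
    intro M n
    induction n with
    | zero => simp [poch]
    | succ n ih =>
      rw [poch, Finset.prod_range_succ]
      refine le_trans (norm_mul_le _ _) (mul_le_mul ih ?_ (norm_nonneg _) ?_)
      · refine le_trans (norm_add_le _ _) ?_
        have h1 : ‖((n : ℂ) • (1 : Matrix (Fin r) (Fin r) ℂ))‖ = (n : ℝ) := by
          rw [norm_smul, Complex.norm_natCast, norm_one, mul_one]
        rw [h1]; linarith
      · exact Finset.prod_nonneg fun k _ => by positivity
  have hCinv : ∀ n : ℕ, ‖(poch C n)⁻¹‖ ≤ ∏ k ∈ Finset.range n, cnorm k := by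
    intro n
    induction n with
    | zero => simp [poch]
    | succ n ih =>
      rw [poch, Matrix.mul_inv_rev, Finset.prod_range_succ, mul_comm (∏ k ∈ Finset.range n, cnorm k)]
      exact le_trans (norm_mul_le _ _)
        (mul_le_mul le_rfl ih (norm_nonneg _) (hcnonneg n))
  have hterm : ∀ n : ℕ, ‖((n.factorial : ℂ)⁻¹ * x ^ n) •
      (poch A n * poch B n * (poch C n)⁻¹)‖ ≤ g n := by
    intro n
    rw [norm_smul]
    have h1 : ‖((n.factorial : ℂ)⁻¹ * x ^ n)‖ = (n.factorial : ℝ)⁻¹ * ‖x‖ ^ n := by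
      rw [norm_mul, norm_inv, norm_pow, Complex.norm_natCast]
    have hgn : g n = (n.factorial : ℝ)⁻¹ * ‖x‖ ^ n *
        ∏ k ∈ Finset.range n, ((a + k) * (b + k) * cnorm k) := rfl
    rw [h1, hgn]
    refine mul_le_mul_of_nonneg_left ?_ (by positivity)
    have h2 : ∏ k ∈ Finset.range n, ((a + k) * (b + k) * cnorm k)
        = (∏ k ∈ Finset.range n, (a + k)) * (∏ k ∈ Finset.range n, (b + k)) *
          ∏ k ∈ Finset.range n, cnorm k := by
      rw [← Finset.prod_mul_distrib, ← Finset.prod_mul_distrib]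
    rw [h2]
    have hAn := hpoch A n
    have hBn := hpoch B n
    have hCn := hCinv n
    have pa : (0:ℝ) ≤ ∏ k ∈ Finset.range n, (a + k) :=
      Finset.prod_nonneg fun k _ => by positivity
    have pb : (0:ℝ) ≤ ∏ k ∈ Finset.range n, (b + k) :=
      Finset.prod_nonneg fun k _ => by positivity
    calc ‖poch A n * poch B n * (poch C n)⁻¹‖
        ≤ ‖poch A n * poch B n‖ * ‖(poch C n)⁻¹‖ := norm_mul_le _ _
      _ ≤ (‖poch A n‖ * ‖poch B n‖) * ‖(poch C n)⁻¹‖ :=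
          mul_le_mul_of_nonneg_right (norm_mul_le _ _) (norm_nonneg _)
      _ ≤ ((∏ k ∈ Finset.range n, (a + k)) * ∏ k ∈ Finset.range n, (b + k)) *
            ∏ k ∈ Finset.range n, cnorm k := by
          refine mul_le_mul ?_ hCn (norm_nonneg _) (mul_nonneg pa pb)
          exact mul_le_mul hAn hBn (norm_nonneg _) pa
  -- summability of g
  set ρ : ℝ := (1 + ‖x‖) / 2 with hρ
  have hρ1 : ρ < 1 := by rw [hρ]; linarith
  have hxρ : ‖x‖ < ρ := by rw [hρ]; linarith
  refine Summable.of_norm_bounded ?_ hterm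
  apply summable_of_ratio_norm_eventually_le hρ1
  -- eventual bound on the inverse norm
  have hcbound : ∀ n : ℕ, ‖C‖ < (n : ℝ) → cnorm n ≤ ((n : ℝ) - ‖C‖)⁻¹ := by
    intro n hn
    have hn0 : (0 : ℝ) < (n : ℝ) := lt_of_le_of_lt (norm_nonneg C) hn
    have hn0' : ((n : ℕ) : ℂ) ≠ 0 := Nat.cast_ne_zero.mpr (Nat.cast_pos.mp hn0).ne'
    set t : Matrix (Fin r) (Fin r) ℂ := -(((n : ℂ))⁻¹ • C) with ht
    have htnorm : ‖t‖ = ‖C‖ / (n : ℝ) := by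
      rw [ht, norm_neg, norm_smul, norm_inv, Complex.norm_natCast, div_eq_inv_mul]
    have htlt : ‖t‖ < 1 := by rw [htnorm, div_lt_one hn0]; exact hn
    have hfact : C + (n : ℂ) • 1 = (n : ℂ) • (1 - t) := by
      rw [ht, smul_sub, smul_neg, smul_smul, mul_inv_cancel₀ hn0', one_smul,
        sub_neg_eq_add, add_comm]
    have hone : IsUnit ((1 : Matrix (Fin r) (Fin r) ℂ) - t) :=
      isUnit_one_sub_of_norm_lt_one htlt
    letI : Invertible ((n : ℕ) : ℂ) := invertibleOfNonzero hn0'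
    have hdet : IsUnit ((1 : Matrix (Fin r) (Fin r) ℂ) - t).det :=
      (Matrix.isUnit_iff_isUnit_det _).mp hone
    have hinv : (C + (n : ℂ) • 1)⁻¹ = ((n : ℂ))⁻¹ • ((1 : Matrix (Fin r) (Fin r) ℂ) - t)⁻¹ := by
      rw [hfact]
      apply Matrix.inv_eq_right_inv
      rw [smul_mul_smul_comm, mul_inv_cancel₀ hn0', Matrix.mul_nonsing_inv _ hdet, one_smul]
    have hgeom : ((1 : Matrix (Fin r) (Fin r) ℂ) - t)⁻¹ = ∑' i : ℕ, t ^ i := by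
      rw [Matrix.nonsing_inv_eq_ringInverse, ← geom_series_eq_inverse t htlt]
      rfl
    have hbnd : ‖((1 : Matrix (Fin r) (Fin r) ℂ) - t)⁻¹‖ ≤ (1 - ‖t‖)⁻¹ := by
      rw [hgeom]
      have := tsum_geometric_le_of_norm_lt_one t htlt
      rw [norm_one] at this
      have h' : ‖∑' i : ℕ, t ^ i‖ ≤ 1 - 1 + (1 - ‖t‖)⁻¹ := this
      linarith
    have : cnorm n = ((n : ℝ))⁻¹ * ‖((1 : Matrix (Fin r) (Fin r) ℂ) - t)⁻¹‖ := by
      rw [hcnorm]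
      simp only
      rw [hinv, norm_smul, norm_inv, Complex.norm_natCast]
    rw [this]
    have h1t : (0:ℝ) < 1 - ‖t‖ := by linarith [htlt]
    calc ((n : ℝ))⁻¹ * ‖((1 : Matrix (Fin r) (Fin r) ℂ) - t)⁻¹‖
        ≤ ((n : ℝ))⁻¹ * (1 - ‖t‖)⁻¹ := by
          exact mul_le_mul_of_nonneg_left hbnd (by positivity)
      _ = ((n : ℝ) - ‖C‖)⁻¹ := by
          rw [htnorm, ← mul_inv]
          congr 1
          field_simp
  -- tendsto of the ratio majorant
  have hq : Tendsto (fun n : ℕ => ‖x‖ *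
      (((n : ℝ) + a) / ((n : ℝ) + 1) * (((n : ℝ) + b) / ((n : ℝ) - ‖C‖))))
      atTop (nhds (‖x‖)) := by
    have h12 := (tendsto_ratio a 1).mul (tendsto_ratio b (-‖C‖))
    have := tendsto_const_nhds (x := ‖x‖) (f := atTop (α := ℕ)) |>.mul h12
    simpa [sub_eq_add_neg] using this
  have hev : ∀ᶠ n : ℕ in atTop, ‖x‖ *
      (((n : ℝ) + a) / ((n : ℝ) + 1) * (((n : ℝ) + b) / ((n : ℝ) - ‖C‖))) < ρ :=
    hq.eventually (gt_mem_nhds hxρ)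
  have hnC : ∀ᶠ n : ℕ in atTop, ‖C‖ < (n : ℝ) :=
    tendsto_natCast_atTop_atTop.eventually_gt_atTop ‖C‖
  filter_upwards [hev, hnC] with n hqn hn
  rw [Real.norm_eq_abs, Real.norm_eq_abs, _root_.abs_of_nonneg (hgnonneg _),
    _root_.abs_of_nonneg (hgnonneg _)]
  have hrec : g (n + 1) = g n *
      (‖x‖ * ((a + n) * ((b + n) * cnorm n)) / ((n : ℝ) + 1)) := by
    rw [hg]
    simp only [Finset.prod_range_succ, pow_succ, Nat.factorial_succ, Nat.cast_mul,
      mul_inv, Nat.cast_add, Nat.cast_one]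
    ring
  rw [hrec]
  have hsub : (0:ℝ) < (n : ℝ) - ‖C‖ := by linarith
  have step1 : ‖x‖ * ((a + n) * ((b + n) * cnorm n)) / ((n : ℝ) + 1)
      ≤ ‖x‖ * ((a + n) * ((b + n) * ((n : ℝ) - ‖C‖)⁻¹)) / ((n : ℝ) + 1) := by
    have ha0 : (0:ℝ) < a := by rw [ha]; positivity
    have hb0 : (0:ℝ) < b := by rw [hb]; positivity
    have h' : (b + (n:ℝ)) * cnorm n ≤ (b + n) * ((n : ℝ) - ‖C‖)⁻¹ :=
      mul_le_mul_of_nonneg_left (hcbound n hn) (by positivity)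
    have h'' : (a + (n:ℝ)) * ((b + n) * cnorm n) ≤ (a + n) * ((b + n) * ((n : ℝ) - ‖C‖)⁻¹) :=
      mul_le_mul_of_nonneg_left h' (by positivity)
    have h3 : ‖x‖ * ((a + (n:ℝ)) * ((b + n) * cnorm n))
        ≤ ‖x‖ * ((a + n) * ((b + n) * ((n : ℝ) - ‖C‖)⁻¹)) :=
      mul_le_mul_of_nonneg_left h'' (norm_nonneg _)
    exact ((div_le_div_iff_of_pos_right (by positivity : (0:ℝ) < (n:ℝ)+1)).mpr h3)
  have step2 : ‖x‖ * ((a + n) * ((b + n) * ((n : ℝ) - ‖C‖)⁻¹)) / ((n : ℝ) + 1)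
      = ‖x‖ *
        (((n : ℝ) + a) / ((n : ℝ) + 1) * (((n : ℝ) + b) / ((n : ℝ) - ‖C‖))) := by
    field_simp
    ring
  calc g n * (‖x‖ * ((a + n) * ((b + n) * cnorm n)) / ((n : ℝ) + 1))
      ≤ g n * ρ := by
        refine mul_le_mul_of_nonneg_left ?_ (hgnonneg n)
        calc ‖x‖ * ((a + n) * ((b + n) * cnorm n)) / ((n : ℝ) + 1)
            ≤ _ := step1
          _ = _ := step2
          _ ≤ ρ := le_of_lt hqn
    _ = ρ * g n := mul_comm _ _

/-- Gauss hypergeometric matrix function. -/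
noncomputable def F21 {r : ℕ} (A B C : Matrix (Fin r) (Fin r) ℂ) (x : ℂ) :
    Matrix (Fin r) (Fin r) ℂ :=
  ∑' n : ℕ, ((n.factorial : ℂ)⁻¹ * x ^ n) • (poch A n * poch B n * (poch C n)⁻¹)

/-- Contiguous relation for the Gauss hypergeometric matrix function. -/
theorem stmt_4 {r : ℕ} (A B C : Matrix (Fin r) (Fin r) ℂ)
    (hC : ∀ k : ℕ, IsUnit (C + (k : ℂ) • 1)) (hA : IsUnit A) (hAB : A * B = B * A)
    (x : ℂ) (hx : ‖x‖ < 1) :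
    F21 (A + 1) B C x =
      F21 A B C x + x • (B * F21 (A + 1) (B + 1) (C + 1) x * C⁻¹) := by
  rcases Nat.eq_zero_or_pos r with rfl | hr
  · exact Subsingleton.elim _ _
  have hC1 : ∀ k : ℕ, IsUnit (C + 1 + (k : ℂ) • 1) := by
    intro k
    have : C + 1 + (k : ℂ) • 1 = C + ((k + 1 : ℕ) : ℂ) • 1 := by
      push_cast
      rw [add_smul, one_smul]
      abel
    rw [this]
    exact hC (k + 1)
  set f1 : ℕ → Matrix (Fin r) (Fin r) ℂ := fun n =>
    ((n.factorial : ℂ)⁻¹ * x ^ n) • (poch (A + 1) n * poch B n * (poch C n)⁻¹) with hf1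
  set f0 : ℕ → Matrix (Fin r) (Fin r) ℂ := fun n =>
    ((n.factorial : ℂ)⁻¹ * x ^ n) • (poch A n * poch B n * (poch C n)⁻¹) with hf0
  set f2 : ℕ → Matrix (Fin r) (Fin r) ℂ := fun n =>
    ((n.factorial : ℂ)⁻¹ * x ^ n) • (poch (A + 1) n * poch (B + 1) n * (poch (C + 1) n)⁻¹)
    with hf2
  have S1 : Summable f1 := summable_term hr (A + 1) B C hC hx
  have S0 : Summable f0 := summable_term hr A B C hC hx
  have S2 : Summable f2 := summable_term hr (A + 1) (B + 1) (C + 1) hC1 hx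
  have Sd : Summable (fun n => f1 n - f0 n) := S1.sub S0
  -- identify the shifted differences
  have hd0 : f1 0 - f0 0 = 0 := by simp [hf1, hf0, poch]
  have hdsucc : ∀ n : ℕ, f1 (n + 1) - f0 (n + 1) = x • (B * f2 n * C⁻¹) := by
    intro n
    have hkey := key A B C hAB n
    have hsc : ((n + 1).factorial : ℂ)⁻¹ * x ^ (n + 1) * ((n : ℂ) + 1)
        = x * ((n.factorial : ℂ)⁻¹ * x ^ n) := by
      have hne : ((n : ℂ) + 1) ≠ 0 := Nat.cast_add_one_ne_zero n
      have hfac : (n.factorial : ℂ) ≠ 0 := Nat.cast_ne_zero.mpr n.factorial_ne_zero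
      rw [Nat.factorial_succ, Nat.cast_mul, mul_inv, pow_succ]
      push_cast
      field_simp
    calc f1 (n + 1) - f0 (n + 1)
        = (((n + 1).factorial : ℂ)⁻¹ * x ^ (n + 1)) •
            (poch (A + 1) (n + 1) * poch B (n + 1) * (poch C (n + 1))⁻¹
              - poch A (n + 1) * poch B (n + 1) * (poch C (n + 1))⁻¹) := by
          rw [smul_sub]
      _ = (((n + 1).factorial : ℂ)⁻¹ * x ^ (n + 1)) • (((n : ℂ) + 1) •
            (B * (poch (A + 1) n * poch (B + 1) n * (poch (C + 1) n)⁻¹) * C⁻¹)) := by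
          rw [hkey]; rw [add_sub_cancel_left]
      _ = (((n + 1).factorial : ℂ)⁻¹ * x ^ (n + 1) * ((n : ℂ) + 1)) •
            (B * (poch (A + 1) n * poch (B + 1) n * (poch (C + 1) n)⁻¹) * C⁻¹) := by
          rw [smul_smul]
      _ = x • (B * f2 n * C⁻¹) := by
          rw [hsc, hf2]
          simp only [Matrix.mul_smul, Matrix.smul_mul, smul_smul]
  -- sum the differences
  have hsum : F21 (A + 1) B C x - F21 A B C x = x • (B * F21 (A + 1) (B + 1) (C + 1) x * C⁻¹) := by
    have h1 : F21 (A + 1) B C x - F21 A B C x = ∑' n, (f1 n - f0 n) :=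
      (Summable.tsum_sub S1 S0).symm
    rw [h1, Sd.tsum_eq_zero_add, hd0, zero_add]
    have h2 : ∀ n : ℕ, f1 (n + 1) - f0 (n + 1) = x • (B * f2 n * C⁻¹) := hdsucc
    rw [tsum_congr h2]
    have hs2 : Summable (fun n => B * f2 n) := S2.mul_left B
    have hs3 : Summable (fun n => B * f2 n * C⁻¹) := hs2.mul_right C⁻¹
    rw [Summable.tsum_const_smul x hs3, Summable.tsum_mul_right _ hs2, Summable.tsum_mul_left _ S2]
    rfl
  rw [← hsum]
  abel
end

section
/- Let A, B, B', C, C' ∈ ℂ^{r×r} with C + kI and C' + kI invertible for all integers k ≥ 0, A invertible, and A, B, B' pairwise commuting, and C, C' commuting with each other. Then the Appell matrix function F₂ satisfies: F₂(A+I, B, B'; C, C'; x, y) = F₂(A, B, B'; C, C'; x, y) + x·B·F₂(A+I, B+I, B'; C+I, C'; x, y)·C^{-1} + y·B'·F₂(A+I, B, B'+I; C, C'+I; x, y)·C'^{-1}, for |x| + |y| < 1. -/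
open Matrix Complex Finset

/-- Appell matrix function F₂. -/
noncomputable def F2A {r : ℕ} (A B B' C C' : Matrix (Fin r) (Fin r) ℂ) (x y : ℂ) :
    Matrix (Fin r) (Fin r) ℂ :=
  ∑' p : ℕ × ℕ, (((p.1.factorial : ℂ) * p.2.factorial)⁻¹ * x ^ p.1 * y ^ p.2) •
    (poch A (p.1 + p.2) * poch B p.1 * poch B' p.2 *
      (poch C p.1)⁻¹ * (poch C' p.2)⁻¹)

namespace F2Aux

open Filter Topology

attribute [local instance] Matrix.linftyOpNormedRing Matrix.linftyOpNormedAlgebra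
  Matrix.linfty_opNormOneClass

variable {r : ℕ}

local instance : CompleteSpace (Matrix (Fin r) (Fin r) ℂ) :=
  (inferInstance : CompleteSpace (Fin r → Fin r → ℂ))

noncomputable def term (A B B' C C' : Matrix (Fin r) (Fin r) ℂ) (x y : ℂ) (p : ℕ × ℕ) :
    Matrix (Fin r) (Fin r) ℂ :=
  (((p.1.factorial : ℂ) * p.2.factorial)⁻¹ * x ^ p.1 * y ^ p.2) •
    (poch A (p.1 + p.2) * poch B p.1 * poch B' p.2 *
      (poch C p.1)⁻¹ * (poch C' p.2)⁻¹)

lemma poch_succ_left (A : Matrix (Fin r) (Fin r) ℂ) (k : ℕ) :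
    poch A (k + 1) = A * poch (A + 1) k := by
  induction k with
  | zero => simp [poch]
  | succ k ih =>
    have h1 : A + ((k + 1 : ℕ) : ℂ) • 1 = (A + 1) + (k : ℂ) • 1 := by
      push_cast
      rw [add_smul, one_smul]
      abel
    calc poch A (k + 2) = poch A (k + 1) * (A + ((k + 1 : ℕ) : ℂ) • 1) := by
          simp [poch]
      _ = A * poch (A + 1) k * ((A + 1) + (k : ℂ) • 1) := by rw [ih, h1]
      _ = A * poch (A + 1) (k + 1) := by rw [mul_assoc]; rfl

lemma commute_poch {X Y : Matrix (Fin r) (Fin r) ℂ} (h : Commute Y X) (n : ℕ) :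
    Commute Y (poch X n) := by
  induction n with
  | zero => exact Commute.one_right Y
  | succ n ih =>
    refine ih.mul_right (h.add_right ?_)
    show Y * ((n : ℂ) • 1) = ((n : ℂ) • 1) * Y
    simp [mul_smul_comm, smul_mul_assoc]

lemma poch_add_one_succ (A : Matrix (Fin r) (Fin r) ℂ) (k : ℕ) :
    poch (A + 1) (k + 1) = poch A (k + 1) + ((k : ℂ) + 1) • poch (A + 1) k := by
  have hc : Commute A (A + 1) := by
    show A * (A + 1) = (A + 1) * A
    rw [mul_add, add_mul, mul_one, one_mul]
  have h1 : poch (A + 1) (k + 1) = poch (A + 1) k * ((A + 1) + (k : ℂ) • 1) := rfl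
  rw [h1, poch_succ_left, mul_add, mul_add, mul_one, mul_smul_comm, mul_one,
    ← (commute_poch hc k).eq, add_smul, one_smul]
  abel

lemma inv_comm {M N : Matrix (Fin r) (Fin r) ℂ} (h : M * N = N * M) :
    M⁻¹ * N⁻¹ = N⁻¹ * M⁻¹ := by
  rw [← Matrix.mul_inv_rev, ← Matrix.mul_inv_rev, h]

lemma poch_inv_succ (C : Matrix (Fin r) (Fin r) ℂ) (k : ℕ) :
    (poch C (k + 1))⁻¹ = (poch (C + 1) k)⁻¹ * C⁻¹ := by
  rw [poch_succ_left, Matrix.mul_inv_rev]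


section NE
variable [Nonempty (Fin r)]

lemma norm_poch_le (A : Matrix (Fin r) (Fin r) ℂ) (k : ℕ) :
    ‖poch A k‖ ≤ ∏ j ∈ range k, (‖A‖ + j) := by
  induction k with
  | zero => simp [poch]
  | succ k ih =>
    rw [prod_range_succ]
    have h2 : ‖A + (k : ℂ) • 1‖ ≤ ‖A‖ + k := by
      calc ‖A + (k : ℂ) • 1‖ ≤ ‖A‖ + ‖(k : ℂ) • (1 : Matrix (Fin r) (Fin r) ℂ)‖ :=
            norm_add_le _ _
        _ = ‖A‖ + k := by rw [norm_smul]; simp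
    calc ‖poch A (k + 1)‖ ≤ ‖poch A k‖ * ‖A + (k : ℂ) • 1‖ := norm_mul_le _ _
      _ ≤ (∏ j ∈ range k, (‖A‖ + j)) * (‖A‖ + k) :=
          mul_le_mul ih h2 (norm_nonneg _) (prod_nonneg fun j _ => by positivity)

lemma norm_poch_inv_le (C : Matrix (Fin r) (Fin r) ℂ) (k : ℕ) :
    ‖(poch C k)⁻¹‖ ≤ ∏ j ∈ range k, ‖(C + (j : ℂ) • 1)⁻¹‖ := by
  induction k with
  | zero => simp [poch]
  | succ k ih =>
    rw [prod_range_succ]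
    have h1 : (poch C (k + 1))⁻¹ = (C + (k : ℂ) • 1)⁻¹ * (poch C k)⁻¹ := by
      have : poch C (k + 1) = poch C k * (C + (k : ℂ) • 1) := rfl
      rw [this, Matrix.mul_inv_rev]
    rw [h1, mul_comm (∏ j ∈ range k, _)]
    calc ‖(C + (k : ℂ) • 1)⁻¹ * (poch C k)⁻¹‖
        ≤ ‖(C + (k : ℂ) • 1)⁻¹‖ * ‖(poch C k)⁻¹‖ := norm_mul_le _ _
      _ ≤ _ := mul_le_mul_of_nonneg_left ih (norm_nonneg _)

lemma tendsto_norm_inv_mul (b : ℝ) (C : Matrix (Fin r) (Fin r) ℂ) :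
    Tendsto (fun k : ℕ => (b + k) * ‖(C + (k : ℂ) • 1)⁻¹‖) atTop (𝓝 1) := by
  have key : ∀ k : ℕ, 1 ≤ k → (b + k) * ‖(C + (k : ℂ) • 1)⁻¹‖
      = ((b + k) * (k : ℝ)⁻¹) * ‖((k : ℂ)⁻¹ • C + 1)⁻¹‖ := by
    intro k hk
    have hk0 : (k : ℂ) ≠ 0 := Nat.cast_ne_zero.mpr (by omega)
    have hfac : C + (k : ℂ) • 1 = ((k : ℂ) • (1 : Matrix (Fin r) (Fin r) ℂ)) *
        ((k : ℂ)⁻¹ • C + 1) := by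
      rw [smul_mul_assoc, one_mul, smul_add, smul_smul, mul_inv_cancel₀ hk0, one_smul]
    have hinv1 : ((k : ℂ) • (1 : Matrix (Fin r) (Fin r) ℂ))⁻¹ = (k : ℂ)⁻¹ • 1 := by
      apply Matrix.inv_eq_right_inv
      rw [smul_mul_assoc, mul_smul_comm, smul_smul, mul_inv_cancel₀ hk0, one_mul, one_smul]
    rw [hfac, Matrix.mul_inv_rev, hinv1, mul_smul_comm, mul_one, norm_smul]
    simp only [norm_inv, Complex.norm_natCast]
    ring
  have t1 : Tendsto (fun k : ℕ => (b + k) * (k : ℝ)⁻¹) atTop (𝓝 1) := by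
    have h : Tendsto (fun k : ℕ => b * (k : ℝ)⁻¹ + 1) atTop (𝓝 1) := by
      have := (tendsto_const_nhds (x := b)).mul tendsto_inv_atTop_nhds_zero_nat
      simpa using this.add (tendsto_const_nhds (x := (1 : ℝ)))
    refine h.congr' ?_
    filter_upwards [eventually_ge_atTop 1] with k hk
    have hk0 : (k : ℝ) ≠ 0 := Nat.cast_ne_zero.mpr (by omega)
    field_simp
  have t2 : Tendsto (fun k : ℕ => ‖((k : ℂ)⁻¹ • C + 1)⁻¹‖) atTop (𝓝 1) := by
    have hM : Tendsto (fun k : ℕ => (k : ℂ)⁻¹ • C + 1) atTop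
        (𝓝 (1 : Matrix (Fin r) (Fin r) ℂ)) := by
      have hc : Tendsto (fun k : ℕ => (k : ℂ)⁻¹) atTop (𝓝 0) := by
        have := tendsto_inv_atTop_nhds_zero_nat (𝕜 := ℝ)
        have h2 := (Complex.continuous_ofReal.tendsto 0).comp this
        rw [Complex.ofReal_zero] at h2
        refine h2.congr fun k => ?_
        simp [Function.comp_def]
      have := (hc.smul_const C).add (tendsto_const_nhds
        (x := (1 : Matrix (Fin r) (Fin r) ℂ)))
      simpa using this
    have hcont : ContinuousAt (fun M : Matrix (Fin r) (Fin r) ℂ => ‖Ring.inverse M‖)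
        (1 : Matrix (Fin r) (Fin r) ℂ) := by
      have h1 := NormedRing.inverse_continuousAt (1 : (Matrix (Fin r) (Fin r) ℂ)ˣ)
      have h2 := h1.norm
      simp only [Units.val_one] at h2
      exact h2
    have := hcont.tendsto.comp hM
    simp only [Function.comp_def, Ring.inverse_one, norm_one] at this
    refine this.congr fun k => ?_
    rw [Matrix.nonsing_inv_eq_ringInverse]
  have := t1.mul t2
  rw [one_mul] at this
  refine this.congr' ?_
  filter_upwards [eventually_ge_atTop 1] with k hk
  exact (key k hk).symm


lemma tendsto_ratio (b : ℝ) : Tendsto (fun k : ℕ => (b + k) / (k + 1)) atTop (𝓝 1) := by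
  have h : Tendsto (fun k : ℕ => (b - 1) * (1 / ((k : ℝ) + 1)) + 1) atTop (𝓝 1) := by
    have := (tendsto_const_nhds (x := b - 1)).mul tendsto_one_div_add_atTop_nhds_zero_nat
    simpa using this.add (tendsto_const_nhds (x := (1 : ℝ)))
  refine h.congr fun k => ?_
  have hk0 : (k : ℝ) + 1 ≠ 0 := by positivity
  field_simp
  ring


lemma prod_range_le_of_one_le {f : ℕ → ℝ} (h1 : ∀ j, 1 ≤ f j) {m k : ℕ} (hmk : m ≤ k) :
    ∏ j ∈ range m, f j ≤ ∏ j ∈ range k, f j := by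
  obtain ⟨n, rfl⟩ := Nat.exists_eq_add_of_le hmk
  rw [Finset.prod_range_add]
  have h0 : 0 ≤ ∏ j ∈ range m, f j :=
    Finset.prod_nonneg fun j _ => le_trans zero_le_one (h1 j)
  have h2 : (1:ℝ) ≤ ∏ i ∈ range n, f (m + i) := by
    calc (1:ℝ) = ∏ _i ∈ range n, (1:ℝ) := by simp
      _ ≤ ∏ i ∈ range n, f (m + i) :=
        Finset.prod_le_prod (fun j _ => zero_le_one) fun j _ => h1 _
  exact le_mul_of_one_le_right h0 h2

lemma term_norm_bound (A B B' C C' : Matrix (Fin r) (Fin r) ℂ) (x y : ℂ)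
    (aF bF cF : ℕ → ℝ)
    (haF : ∀ j : ℕ, (‖A‖ + j) / (j + 1) ≤ aF j) (haF1 : ∀ j, (1:ℝ) ≤ aF j)
    (hbF : ∀ j : ℕ, (‖B‖ + j) * ‖(C + (j : ℂ) • 1)⁻¹‖ ≤ bF j) (hbF1 : ∀ j, (1:ℝ) ≤ bF j)
    (hcF : ∀ j : ℕ, (‖B'‖ + j) * ‖(C' + (j : ℂ) • 1)⁻¹‖ ≤ cF j) (hcF1 : ∀ j, (1:ℝ) ≤ cF j)
    (m n : ℕ) :
    ‖term A B B' C C' x y (m, n)‖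
      ≤ (∏ j ∈ range (m + n), (aF j * bF j * cF j)) * (‖x‖ + ‖y‖) ^ (m + n) := by
  have hPA := norm_poch_le A (m + n)
  have hPB := norm_poch_le B m
  have hPB' := norm_poch_le B' n
  have hQC := norm_poch_inv_le C m
  have hQC' := norm_poch_inv_le C' n
  set PA : ℝ := ∏ j ∈ range (m + n), (‖A‖ + j) with hPA_def
  set PB : ℝ := ∏ j ∈ range m, (‖B‖ + j) with hPB_def
  set PB' : ℝ := ∏ j ∈ range n, (‖B'‖ + j) with hPB'_def
  set QC : ℝ := ∏ j ∈ range m, ‖(C + (j : ℂ) • 1)⁻¹‖ with hQC_def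
  set QC' : ℝ := ∏ j ∈ range n, ‖(C' + (j : ℂ) • 1)⁻¹‖ with hQC'_def
  have hPA0 : 0 ≤ PA := Finset.prod_nonneg fun j _ =>
    add_nonneg (norm_nonneg _) (Nat.cast_nonneg _)
  have hPB0 : 0 ≤ PB := Finset.prod_nonneg fun j _ =>
    add_nonneg (norm_nonneg _) (Nat.cast_nonneg _)
  have hPB'0 : 0 ≤ PB' := Finset.prod_nonneg fun j _ =>
    add_nonneg (norm_nonneg _) (Nat.cast_nonneg _)
  have hQC0 : 0 ≤ QC := Finset.prod_nonneg fun j _ => norm_nonneg _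
  have hQC'0 : 0 ≤ QC' := Finset.prod_nonneg fun j _ => norm_nonneg _
  -- norm of the matrix part
  have hmat : ‖poch A (m + n) * poch B m * poch B' n * (poch C m)⁻¹ * (poch C' n)⁻¹‖
      ≤ PA * PB * PB' * QC * QC' := by
    calc ‖poch A (m + n) * poch B m * poch B' n * (poch C m)⁻¹ * (poch C' n)⁻¹‖
        ≤ ‖poch A (m + n)‖ * ‖poch B m‖ * ‖poch B' n‖ * ‖(poch C m)⁻¹‖ * ‖(poch C' n)⁻¹‖ := by
          refine le_trans (norm_mul_le _ _) ?_
          refine mul_le_mul_of_nonneg_right ?_ (norm_nonneg _)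
          refine le_trans (norm_mul_le _ _) ?_
          refine mul_le_mul_of_nonneg_right ?_ (norm_nonneg _)
          refine le_trans (norm_mul_le _ _) ?_
          refine mul_le_mul_of_nonneg_right ?_ (norm_nonneg _)
          exact norm_mul_le _ _
      _ ≤ PA * PB * PB' * QC * QC' := by
          refine mul_le_mul (mul_le_mul (mul_le_mul (mul_le_mul hPA hPB (norm_nonneg _) hPA0)
            hPB' (norm_nonneg _) (mul_nonneg hPA0 hPB0)) hQC (norm_nonneg _)
            (mul_nonneg (mul_nonneg hPA0 hPB0) hPB'0)) hQC' (norm_nonneg _)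
            (mul_nonneg (mul_nonneg (mul_nonneg hPA0 hPB0) hPB'0) hQC0)
  -- scalar coefficient
  have hcoef : ‖(((m.factorial : ℂ) * n.factorial)⁻¹ * x ^ m * y ^ n)‖
      = (((m.factorial : ℝ) * n.factorial)⁻¹) * ‖x‖ ^ m * ‖y‖ ^ n := by
    rw [norm_mul, norm_mul, norm_inv, norm_mul, norm_pow, norm_pow]
    simp [Complex.norm_natCast]
  have hterm_le : ‖term A B B' C C' x y (m, n)‖
      ≤ (((m.factorial : ℝ) * n.factorial)⁻¹) * ‖x‖ ^ m * ‖y‖ ^ n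
        * (PA * PB * PB' * QC * QC') := by
    rw [term, norm_smul, hcoef]
    exact mul_le_mul_of_nonneg_left hmat (by positivity)
  -- bounds on the products
  have h1 : PA ≤ ((m + n).factorial : ℝ) * ∏ j ∈ range (m + n), aF j := by
    rw [hPA_def, ← Finset.prod_range_add_one_eq_factorial, Nat.cast_prod, ← Finset.prod_mul_distrib]
    refine Finset.prod_le_prod (fun j _ => add_nonneg (norm_nonneg _) (Nat.cast_nonneg _))
      fun j _ => ?_
    have hj : (0 : ℝ) < (j : ℝ) + 1 := by positivity
    calc ‖A‖ + (j : ℝ) = ((j : ℝ) + 1) * ((‖A‖ + j) / (j + 1)) := by field_simp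
      _ ≤ ((j : ℝ) + 1) * aF j := mul_le_mul_of_nonneg_left (haF j) (le_of_lt hj)
      _ = (((j + 1 : ℕ) : ℝ)) * aF j := by push_cast; ring
  have h2 : PB * QC ≤ ∏ j ∈ range (m + n), bF j := by
    rw [← Finset.prod_mul_distrib]
    calc ∏ j ∈ range m, ((‖B‖ + j) * ‖(C + (j : ℂ) • 1)⁻¹‖) ≤ ∏ j ∈ range m, bF j :=
          Finset.prod_le_prod (fun j _ => mul_nonneg
            (add_nonneg (norm_nonneg _) (Nat.cast_nonneg _)) (norm_nonneg _)) fun j _ => hbF j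
      _ ≤ ∏ j ∈ range (m + n), bF j :=
          prod_range_le_of_one_le hbF1 (Nat.le_add_right m n)
  have h3 : PB' * QC' ≤ ∏ j ∈ range (m + n), cF j := by
    rw [← Finset.prod_mul_distrib]
    calc ∏ j ∈ range n, ((‖B'‖ + j) * ‖(C' + (j : ℂ) • 1)⁻¹‖) ≤ ∏ j ∈ range n, cF j :=
          Finset.prod_le_prod (fun j _ => mul_nonneg
            (add_nonneg (norm_nonneg _) (Nat.cast_nonneg _)) (norm_nonneg _)) fun j _ => hcF j
      _ ≤ ∏ j ∈ range (m + n), cF j :=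
          prod_range_le_of_one_le hcF1 (by omega)
  have hprodA0 : 0 ≤ ∏ j ∈ range (m + n), aF j :=
    Finset.prod_nonneg fun j _ => le_trans zero_le_one (haF1 j)
  have hprodB0 : 0 ≤ ∏ j ∈ range (m + n), bF j :=
    Finset.prod_nonneg fun j _ => le_trans zero_le_one (hbF1 j)
  have hprodC0 : 0 ≤ ∏ j ∈ range (m + n), cF j :=
    Finset.prod_nonneg fun j _ => le_trans zero_le_one (hcF1 j)
  have hDsplit : ∏ j ∈ range (m + n), (aF j * bF j * cF j)
      = (∏ j ∈ range (m + n), aF j) * (∏ j ∈ range (m + n), bF j)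
        * (∏ j ∈ range (m + n), cF j) := by
    rw [Finset.prod_mul_distrib, Finset.prod_mul_distrib]
  have hD0 : 0 ≤ ∏ j ∈ range (m + n), (aF j * bF j * cF j) := by
    rw [hDsplit]; exact mul_nonneg (mul_nonneg hprodA0 hprodB0) hprodC0
  have hstep : PA * PB * PB' * QC * QC'
      ≤ ((m + n).factorial : ℝ) * ∏ j ∈ range (m + n), (aF j * bF j * cF j) := by
    have hre : PA * PB * PB' * QC * QC' = PA * (PB * QC) * (PB' * QC') := by ring
    rw [hre, hDsplit]
    calc PA * (PB * QC) * (PB' * QC')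
        ≤ (((m + n).factorial : ℝ) * ∏ j ∈ range (m + n), aF j)
          * (∏ j ∈ range (m + n), bF j) * (∏ j ∈ range (m + n), cF j) :=
          mul_le_mul (mul_le_mul h1 h2 (mul_nonneg hPB0 hQC0)
              (mul_nonneg (Nat.cast_nonneg _) hprodA0)) h3
            (mul_nonneg hPB'0 hQC'0)
            (mul_nonneg (mul_nonneg (Nat.cast_nonneg _) hprodA0) hprodB0)
      _ = ((m + n).factorial : ℝ) * ((∏ j ∈ range (m + n), aF j)
          * (∏ j ∈ range (m + n), bF j) * (∏ j ∈ range (m + n), cF j)) := by ring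
  have hchoose : (((m + n).choose m : ℝ)) * ‖x‖ ^ m * ‖y‖ ^ n ≤ (‖x‖ + ‖y‖) ^ (m + n) := by
    rw [add_pow]
    have hm : m ∈ range (m + n + 1) := by simp
    have := Finset.single_le_sum
      (f := fun i => ‖x‖ ^ i * ‖y‖ ^ (m + n - i) * ((m + n).choose i : ℝ))
      (fun i _ => by positivity) hm
    simpa [Nat.add_sub_cancel_left, mul_comm, mul_assoc, mul_left_comm] using this
  have hfact : (((m + n).factorial : ℝ)) = ((m + n).choose m : ℝ) * m.factorial * n.factorial := by
    have h := Nat.choose_mul_factorial_mul_factorial (Nat.le_add_right m n)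
    rw [Nat.add_sub_cancel_left] at h
    calc (((m + n).factorial : ℝ)) = (((m + n).choose m * m.factorial * n.factorial : ℕ) : ℝ) := by
          rw [h]
      _ = ((m + n).choose m : ℝ) * m.factorial * n.factorial := by push_cast; ring
  have hfm : (0 : ℝ) < (m.factorial : ℝ) * n.factorial := by positivity
  calc ‖term A B B' C C' x y (m, n)‖
      ≤ (((m.factorial : ℝ) * n.factorial)⁻¹) * ‖x‖ ^ m * ‖y‖ ^ n
        * (PA * PB * PB' * QC * QC') := hterm_le
    _ ≤ (((m.factorial : ℝ) * n.factorial)⁻¹) * ‖x‖ ^ m * ‖y‖ ^ n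
        * (((m + n).factorial : ℝ) * ∏ j ∈ range (m + n), (aF j * bF j * cF j)) :=
        mul_le_mul_of_nonneg_left hstep (by positivity)
    _ = (((m + n).choose m : ℝ) * ‖x‖ ^ m * ‖y‖ ^ n)
        * ∏ j ∈ range (m + n), (aF j * bF j * cF j) := by
        rw [hfact]
        field_simp
    _ ≤ (‖x‖ + ‖y‖) ^ (m + n) * ∏ j ∈ range (m + n), (aF j * bF j * cF j) :=
        mul_le_mul_of_nonneg_right hchoose hD0
    _ = (∏ j ∈ range (m + n), (aF j * bF j * cF j)) * (‖x‖ + ‖y‖) ^ (m + n) := by ring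

lemma term_summable (A B B' C C' : Matrix (Fin r) (Fin r) ℂ) (x y : ℂ)
    (hxy : ‖x‖ + ‖y‖ < 1) :
    Summable (term A B B' C C' x y) := by
  set s : ℝ := ‖x‖ + ‖y‖ with hs_def
  have hs0 : 0 ≤ s := by positivity
  set ρ : ℝ := (1 + s) / 2 with hρ_def
  have hsρ : s < ρ := by rw [hρ_def]; linarith
  have hρ1 : ρ < 1 := by rw [hρ_def]; linarith
  have hρ0 : 0 < ρ := by rw [hρ_def]; linarith
  set aF : ℕ → ℝ := fun j => max 1 ((‖A‖ + j) / (j + 1)) with haF_def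
  set bF : ℕ → ℝ := fun j => max 1 ((‖B‖ + j) * ‖(C + (j : ℂ) • 1)⁻¹‖) with hbF_def
  set cF : ℕ → ℝ := fun j => max 1 ((‖B'‖ + j) * ‖(C' + (j : ℂ) • 1)⁻¹‖) with hcF_def
  set φ : ℕ → ℝ := fun j => aF j * bF j * cF j with hφ_def
  set D : ℕ → ℝ := fun k => ∏ j ∈ range k, φ j with hD_def
  have haF1 : ∀ j, 1 ≤ aF j := fun j => le_max_left _ _
  have hbF1 : ∀ j, 1 ≤ bF j := fun j => le_max_left _ _
  have hcF1 : ∀ j, 1 ≤ cF j := fun j => le_max_left _ _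
  have hφ1 : ∀ j, 1 ≤ φ j := fun j => by
    have h0a : (0:ℝ) ≤ aF j := le_trans zero_le_one (haF1 j)
    have h0b : (0:ℝ) ≤ bF j := le_trans zero_le_one (hbF1 j)
    rw [hφ_def]; dsimp only
    calc (1:ℝ) = 1 * 1 * 1 := by norm_num
      _ ≤ aF j * bF j * cF j := mul_le_mul (mul_le_mul (haF1 j) (hbF1 j) zero_le_one h0a)
          (hcF1 j) zero_le_one (mul_nonneg h0a h0b)
  have hD1 : ∀ k, 1 ≤ D k := by
    intro k
    rw [hD_def]
    calc (1 : ℝ) = ∏ _j ∈ range k, (1 : ℝ) := by simp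
      _ ≤ ∏ j ∈ range k, φ j :=
        Finset.prod_le_prod (fun j _ => zero_le_one) fun j _ => hφ1 j
  have hD0 : ∀ k, 0 ≤ D k := fun k => le_trans zero_le_one (hD1 k)
  -- Claim 1: the pointwise bound
  have hbound : ∀ p : ℕ × ℕ, ‖term A B B' C C' x y p‖ ≤ D (p.1 + p.2) * s ^ (p.1 + p.2) := by
    rintro ⟨m, n⟩
    exact term_norm_bound A B B' C C' x y aF bF cF
      (fun j => le_max_right _ _) haF1 (fun j => le_max_right _ _) hbF1
      (fun j => le_max_right _ _) hcF1 m n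
  -- Claim 2: the ratio tends to 1
  have hφt : Tendsto φ atTop (𝓝 1) := by
    have ha : Tendsto aF atTop (𝓝 1) := by
      have := (tendsto_const_nhds (x := (1:ℝ))).max (tendsto_ratio ‖A‖)
      simpa using this
    have hb : Tendsto bF atTop (𝓝 1) := by
      have := (tendsto_const_nhds (x := (1:ℝ))).max (tendsto_norm_inv_mul ‖B‖ C)
      simpa using this
    have hc : Tendsto cF atTop (𝓝 1) := by
      have := (tendsto_const_nhds (x := (1:ℝ))).max (tendsto_norm_inv_mul ‖B'‖ C')
      simpa using this
    have := (ha.mul hb).mul hc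
    simpa using this
  -- Claim 3: eventual ratio bound
  have hev : ∀ᶠ k in atTop, s * φ k ≤ ρ := by
    have h1 : Tendsto (fun k => s * φ k) atTop (𝓝 s) := by
      have := (tendsto_const_nhds (x := s)).mul hφt
      simpa using this
    exact (h1.eventually_lt_const hsρ).mono fun k hk => le_of_lt hk
  obtain ⟨K, hK⟩ := eventually_atTop.mp hev
  -- Claim 4: geometric bound
  set M : ℝ := D K * s ^ K / ρ ^ K with hM_def
  have hM0 : 0 ≤ M := div_nonneg (mul_nonneg (hD0 K) (pow_nonneg hs0 _))
    (pow_nonneg hρ0.le _)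
  have hgeo : ∀ k, K ≤ k → D k * s ^ k ≤ M * ρ ^ k := by
    intro k hk
    induction k, hk using Nat.le_induction with
    | base =>
      rw [hM_def, div_mul_cancel₀]
      exact pow_ne_zero _ (ne_of_gt hρ0)
    | succ k hk ih =>
      have hDsucc : D (k + 1) = D k * φ k := Finset.prod_range_succ _ _
      calc D (k + 1) * s ^ (k + 1) = (D k * s ^ k) * (s * φ k) := by
            rw [hDsucc, pow_succ]; ring
        _ ≤ (M * ρ ^ k) * ρ := mul_le_mul ih (hK k hk)
            (mul_nonneg hs0 (le_trans zero_le_one (hφ1 k)))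
            (mul_nonneg hM0 (pow_nonneg hρ0.le _))
        _ = M * ρ ^ (k + 1) := by rw [pow_succ]; ring
  -- final comparison
  refine Summable.of_norm_bounded_eventually (g := fun p : ℕ × ℕ => M * (ρ ^ p.1 * ρ ^ p.2)) ?_ ?_
  · refine Summable.mul_left M ?_
    exact (summable_geometric_of_lt_one hρ0.le hρ1).mul_of_nonneg
      (summable_geometric_of_lt_one hρ0.le hρ1)
      (fun _ => pow_nonneg hρ0.le _) fun _ => pow_nonneg hρ0.le _
  · refine Filter.eventually_cofinite.mpr ?_
    refine Set.Finite.subset ((Set.finite_Iio K).prod (Set.finite_Iio K)) ?_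
    rintro ⟨m, n⟩ hp
    simp only [Set.mem_setOf_eq] at hp
    have hlt : m + n < K := by
      by_contra hge
      refine hp ?_
      have hK' : K ≤ m + n := le_of_not_gt hge
      calc ‖term A B B' C C' x y (m, n)‖ ≤ D (m + n) * s ^ (m + n) := hbound (m, n)
        _ ≤ M * ρ ^ (m + n) := hgeo _ hK'
        _ = M * (ρ ^ m * ρ ^ n) := by rw [pow_add]
    exact ⟨by simp only [Set.mem_Iio]; omega, by simp only [Set.mem_Iio]; omega⟩

end NE

noncomputable def hterm (A B B' C C' : Matrix (Fin r) (Fin r) ℂ) (x y : ℂ) (p : ℕ × ℕ) :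
    Matrix (Fin r) (Fin r) ℂ :=
  (p.1 : ℂ) • ((((p.1.factorial : ℂ) * p.2.factorial)⁻¹ * x ^ p.1 * y ^ p.2) •
    (poch A (p.1 - 1 + p.2) * poch B p.1 * poch B' p.2 *
      (poch C p.1)⁻¹ * (poch C' p.2)⁻¹))

noncomputable def kterm (A B B' C C' : Matrix (Fin r) (Fin r) ℂ) (x y : ℂ) (p : ℕ × ℕ) :
    Matrix (Fin r) (Fin r) ℂ :=
  (p.2 : ℂ) • ((((p.1.factorial : ℂ) * p.2.factorial)⁻¹ * x ^ p.1 * y ^ p.2) •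
    (poch A (p.1 + (p.2 - 1)) * poch B p.1 * poch B' p.2 *
      (poch C p.1)⁻¹ * (poch C' p.2)⁻¹))

lemma poch_split (A : Matrix (Fin r) (Fin r) ℂ) (m n : ℕ) :
    poch (A + 1) (m + n) = poch A (m + n) + (m : ℂ) • poch (A + 1) (m - 1 + n)
      + (n : ℂ) • poch (A + 1) (m + (n - 1)) := by
  rcases m with _ | m
  · rcases n with _ | n
    · simp [poch]
    · simp only [Nat.cast_zero, zero_smul, add_zero, zero_add, Nat.add_sub_cancel]
      rw [poch_add_one_succ]
      push_cast
      congr 1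
  · rcases n with _ | n
    · simp only [Nat.cast_zero, zero_smul, add_zero, Nat.add_sub_cancel]
      rw [poch_add_one_succ]
      push_cast
      congr 1
    · have hidx1 : m + 1 - 1 + (n + 1) = m + n + 1 := by omega
      have hidx2 : m + 1 + (n + 1 - 1) = m + n + 1 := by omega
      have hidx3 : m + 1 + (n + 1) = (m + n + 1) + 1 := by omega
      rw [hidx1, hidx2, hidx3, poch_add_one_succ]
      have hsm : ((m + 1 : ℕ) : ℂ) • poch (A + 1) (m + n + 1)
            + ((n + 1 : ℕ) : ℂ) • poch (A + 1) (m + n + 1)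
          = (((m + n + 1 : ℕ) : ℂ) + 1) • poch (A + 1) (m + n + 1) := by
        rw [← add_smul]
        congr 1
        push_cast
        ring
      rw [add_assoc (poch A (m + n + 1 + 1)), hsm]

lemma term_split (A B B' C C' : Matrix (Fin r) (Fin r) ℂ) (x y : ℂ) (p : ℕ × ℕ) :
    term (A + 1) B B' C C' x y p = term A B B' C C' x y p
      + hterm (A + 1) B B' C C' x y p + kterm (A + 1) B B' C C' x y p := by
  obtain ⟨m, n⟩ := p
  simp only [term, hterm, kterm]
  rw [poch_split A m n]
  simp only [add_mul, smul_mul_assoc, smul_add, smul_smul]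
  congr 2 <;> rw [mul_comm]

lemma hterm_shift (A B B' C C' : Matrix (Fin r) (Fin r) ℂ) (x y : ℂ)
    (hAB : A * B = B * A) (hCC' : C * C' = C' * C) (m n : ℕ) :
    hterm (A + 1) B B' C C' x y (m + 1, n)
      = x • (B * term (A + 1) (B + 1) B' (C + 1) C' x y (m, n) * C⁻¹) := by
  have hPB : poch (A + 1) (m + n) * B = B * poch (A + 1) (m + n) := by
    have hc : Commute B (A + 1) := by
      show B * (A + 1) = (A + 1) * B
      rw [mul_add, add_mul, mul_one, one_mul, hAB]
    exact ((commute_poch hc (m + n)).eq).symm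
  have hCT : C⁻¹ * (poch C' n)⁻¹ = (poch C' n)⁻¹ * C⁻¹ := by
    refine inv_comm ?_
    exact (commute_poch (show Commute C C' from hCC') n).eq
  have hmatrix : poch (A + 1) (m + 1 - 1 + n) * poch B (m + 1) * poch B' n
        * (poch C (m + 1))⁻¹ * (poch C' n)⁻¹
      = B * (poch (A + 1) (m + n) * poch (B + 1) m * poch B' n
        * (poch (C + 1) m)⁻¹ * (poch C' n)⁻¹) * C⁻¹ := by
    have h1 : m + 1 - 1 + n = m + n := by omega
    rw [h1, poch_succ_left B m, poch_inv_succ C m]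
    calc poch (A + 1) (m + n) * (B * poch (B + 1) m) * poch B' n
          * ((poch (C + 1) m)⁻¹ * C⁻¹) * (poch C' n)⁻¹
        = poch (A + 1) (m + n) * B * poch (B + 1) m * poch B' n
          * (poch (C + 1) m)⁻¹ * (C⁻¹ * (poch C' n)⁻¹) := by
          simp only [mul_assoc]
      _ = B * poch (A + 1) (m + n) * poch (B + 1) m * poch B' n
          * (poch (C + 1) m)⁻¹ * ((poch C' n)⁻¹ * C⁻¹) := by
          rw [hPB, hCT]
      _ = B * (poch (A + 1) (m + n) * poch (B + 1) m * poch B' n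
          * (poch (C + 1) m)⁻¹ * (poch C' n)⁻¹) * C⁻¹ := by
          simp only [mul_assoc]
  have hfac : (m.factorial : ℂ) ≠ 0 := Nat.cast_ne_zero.mpr m.factorial_ne_zero
  have hfac' : (n.factorial : ℂ) ≠ 0 := Nat.cast_ne_zero.mpr n.factorial_ne_zero
  have hsc : ((m + 1 : ℕ) : ℂ) * ((((m + 1).factorial : ℂ) * n.factorial)⁻¹ * x ^ (m + 1) * y ^ n)
      = x * (((m.factorial : ℂ) * n.factorial)⁻¹ * x ^ m * y ^ n) := by
    have hm1 : ((m : ℂ) + 1) ≠ 0 := by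
      exact_mod_cast (Nat.cast_ne_zero (R := ℂ)).mpr (Nat.succ_ne_zero m)
    have h1 : ((m : ℂ) + 1) * ((m : ℂ) + 1)⁻¹ = 1 := mul_inv_cancel₀ hm1
    rw [Nat.factorial_succ]
    push_cast
    simp only [mul_inv, pow_succ]
    linear_combination ((m.factorial : ℂ)⁻¹ * (n.factorial : ℂ)⁻¹ * x ^ m * x * y ^ n) * h1
  simp only [hterm, term]
  rw [smul_smul, hsc, hmatrix, mul_smul_comm, smul_mul_assoc, smul_smul]

lemma kterm_shift (A B B' C C' : Matrix (Fin r) (Fin r) ℂ) (x y : ℂ)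
    (hAB' : A * B' = B' * A) (hBB' : B * B' = B' * B) (m n : ℕ) :
    kterm (A + 1) B B' C C' x y (m, n + 1)
      = y • (B' * term (A + 1) B (B' + 1) C (C' + 1) x y (m, n) * C'⁻¹) := by
  have hPB : poch (A + 1) (m + n) * B' = B' * poch (A + 1) (m + n) := by
    have hc : Commute B' (A + 1) := by
      show B' * (A + 1) = (A + 1) * B'
      rw [mul_add, add_mul, mul_one, one_mul, hAB']
    exact ((commute_poch hc (m + n)).eq).symm
  have hRB : poch B m * B' = B' * poch B m :=
    ((commute_poch (show Commute B' B from hBB'.symm) m).eq).symm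
  have hmatrix : poch (A + 1) (m + (n + 1 - 1)) * poch B m * poch B' (n + 1)
        * (poch C m)⁻¹ * (poch C' (n + 1))⁻¹
      = B' * (poch (A + 1) (m + n) * poch B m * poch (B' + 1) n
        * (poch C m)⁻¹ * (poch (C' + 1) n)⁻¹) * C'⁻¹ := by
    have h1 : m + (n + 1 - 1) = m + n := by omega
    rw [h1, poch_succ_left B' n, poch_inv_succ C' n]
    calc poch (A + 1) (m + n) * poch B m * (B' * poch (B' + 1) n)
          * (poch C m)⁻¹ * ((poch (C' + 1) n)⁻¹ * C'⁻¹)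
        = poch (A + 1) (m + n) * (poch B m * B') * (poch (B' + 1) n
          * (poch C m)⁻¹ * ((poch (C' + 1) n)⁻¹ * C'⁻¹)) := by
          simp only [mul_assoc]
      _ = poch (A + 1) (m + n) * B' * (poch B m * (poch (B' + 1) n
          * (poch C m)⁻¹ * ((poch (C' + 1) n)⁻¹ * C'⁻¹))) := by
          rw [hRB]; simp only [mul_assoc]
      _ = B' * (poch (A + 1) (m + n) * poch B m * poch (B' + 1) n
          * (poch C m)⁻¹ * (poch (C' + 1) n)⁻¹) * C'⁻¹ := by
          rw [hPB]; simp only [mul_assoc]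
  have hfac : (n.factorial : ℂ) ≠ 0 := Nat.cast_ne_zero.mpr n.factorial_ne_zero
  have hfac' : (m.factorial : ℂ) ≠ 0 := Nat.cast_ne_zero.mpr m.factorial_ne_zero
  have hsc : ((n + 1 : ℕ) : ℂ) * (((m.factorial : ℂ) * (n + 1).factorial)⁻¹ * x ^ m * y ^ (n + 1))
      = y * (((m.factorial : ℂ) * n.factorial)⁻¹ * x ^ m * y ^ n) := by
    have hn1 : ((n : ℂ) + 1) ≠ 0 := by
      exact_mod_cast (Nat.cast_ne_zero (R := ℂ)).mpr (Nat.succ_ne_zero n)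
    have h1 : ((n : ℂ) + 1) * ((n : ℂ) + 1)⁻¹ = 1 := mul_inv_cancel₀ hn1
    rw [Nat.factorial_succ]
    push_cast
    simp only [mul_inv, pow_succ]
    linear_combination ((m.factorial : ℂ)⁻¹ * (n.factorial : ℂ)⁻¹ * x ^ m * y ^ n * y) * h1
  simp only [kterm, term]
  rw [smul_smul, hsc, hmatrix, mul_smul_comm, smul_mul_assoc, smul_smul]

end F2Aux

section Main

open F2Aux

/-- Contiguous relation for the Appell matrix function F₂. -/
theorem stmt_6 {r : ℕ} (A B B' C C' : Matrix (Fin r) (Fin r) ℂ)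
    (hC : ∀ k : ℕ, IsUnit (C + (k : ℂ) • 1)) (hC' : ∀ k : ℕ, IsUnit (C' + (k : ℂ) • 1))
    (hA : IsUnit A)
    (hAB : A * B = B * A) (hAB' : A * B' = B' * A) (hBB' : B * B' = B' * B)
    (hCC' : C * C' = C' * C)
    (x y : ℂ) (hxy : ‖x‖ + ‖y‖ < 1) :
    F2A (A + 1) B B' C C' x y =
      F2A A B B' C C' x y + x • (B * F2A (A + 1) (B + 1) B' (C + 1) C' x y * C⁻¹)
        + y • (B' * F2A (A + 1) B (B' + 1) C (C' + 1) x y * C'⁻¹) := by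
  rcases Nat.eq_zero_or_pos r with hr | hr
  · subst hr
    haveI : Subsingleton (Matrix (Fin 0) (Fin 0) ℂ) := ⟨fun M N => by ext i j; exact i.elim0⟩
    exact Subsingleton.elim _ _
  haveI : Nonempty (Fin r) := ⟨⟨0, hr⟩⟩
  have hg : Summable (term A B B' C C' x y) := term_summable A B B' C C' x y hxy
  have ht2 : Summable (term (A + 1) (B + 1) B' (C + 1) C' x y) :=
    term_summable _ _ _ _ _ x y hxy
  have ht3 : Summable (term (A + 1) B (B' + 1) C (C' + 1) x y) :=
    term_summable _ _ _ _ _ x y hxy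
  -- first shifted series
  have he1 : Function.Injective (fun q : ℕ × ℕ => ((q.1 + 1, q.2) : ℕ × ℕ)) := by
    rintro ⟨a, b⟩ ⟨c, d⟩ h
    simp only [Prod.mk.injEq] at h
    exact Prod.ext (by omega) h.2
  have hvan1 : ∀ p : ℕ × ℕ, p ∉ Set.range (fun q : ℕ × ℕ => ((q.1 + 1, q.2) : ℕ × ℕ)) →
      hterm (A + 1) B B' C C' x y p = 0 := by
    rintro ⟨m, n⟩ hp
    rcases m with _ | m
    · simp [hterm]
    · exact absurd ⟨(m, n), rfl⟩ hp
  have hcomp1 : ∀ q : ℕ × ℕ, hterm (A + 1) B B' C C' x y (q.1 + 1, q.2)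
      = x • (B * term (A + 1) (B + 1) B' (C + 1) C' x y q * C⁻¹) :=
    fun q => hterm_shift A B B' C C' x y hAB hCC' q.1 q.2
  have hS1 : Summable (fun q : ℕ × ℕ => x • (B * term (A + 1) (B + 1) B' (C + 1) C' x y q * C⁻¹)) :=
    Summable.const_smul x (Summable.mul_right C⁻¹ (Summable.mul_left B ht2))
  have hsum1 : Summable (hterm (A + 1) B B' C C' x y) :=
    (Function.Injective.summable_iff he1 hvan1).mp (hS1.congr fun q => (hcomp1 q).symm)
  have htsum1 : ∑' p : ℕ × ℕ, hterm (A + 1) B B' C C' x y p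
      = x • (B * F2A (A + 1) (B + 1) B' (C + 1) C' x y * C⁻¹) := by
    have hsupp : Function.support (hterm (A + 1) B B' C C' x y)
        ⊆ Set.range (fun q : ℕ × ℕ => ((q.1 + 1, q.2) : ℕ × ℕ)) :=
      Function.support_subset_iff'.mpr hvan1
    rw [← Function.Injective.tsum_eq he1 hsupp]
    calc ∑' q : ℕ × ℕ, hterm (A + 1) B B' C C' x y (q.1 + 1, q.2)
        = ∑' q : ℕ × ℕ, x • (B * term (A + 1) (B + 1) B' (C + 1) C' x y q * C⁻¹) :=
          tsum_congr hcomp1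
      _ = x • ∑' q : ℕ × ℕ, (B * term (A + 1) (B + 1) B' (C + 1) C' x y q * C⁻¹) :=
          Summable.tsum_const_smul x (Summable.mul_right C⁻¹ (Summable.mul_left B ht2))
      _ = x • ((∑' q : ℕ × ℕ, B * term (A + 1) (B + 1) B' (C + 1) C' x y q) * C⁻¹) := by
          rw [Summable.tsum_mul_right C⁻¹ (Summable.mul_left B ht2)]
      _ = x • (B * F2A (A + 1) (B + 1) B' (C + 1) C' x y * C⁻¹) := by
          rw [Summable.tsum_mul_left B ht2]
          rfl
  -- second shifted series
  have he2 : Function.Injective (fun q : ℕ × ℕ => ((q.1, q.2 + 1) : ℕ × ℕ)) := by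
    rintro ⟨a, b⟩ ⟨c, d⟩ h
    simp only [Prod.mk.injEq] at h
    exact Prod.ext h.1 (by omega)
  have hvan2 : ∀ p : ℕ × ℕ, p ∉ Set.range (fun q : ℕ × ℕ => ((q.1, q.2 + 1) : ℕ × ℕ)) →
      kterm (A + 1) B B' C C' x y p = 0 := by
    rintro ⟨m, n⟩ hp
    rcases n with _ | n
    · simp [kterm]
    · exact absurd ⟨(m, n), rfl⟩ hp
  have hcomp2 : ∀ q : ℕ × ℕ, kterm (A + 1) B B' C C' x y (q.1, q.2 + 1)
      = y • (B' * term (A + 1) B (B' + 1) C (C' + 1) x y q * C'⁻¹) :=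
    fun q => kterm_shift A B B' C C' x y hAB' hBB' q.1 q.2
  have hS2 : Summable (fun q : ℕ × ℕ =>
      y • (B' * term (A + 1) B (B' + 1) C (C' + 1) x y q * C'⁻¹)) :=
    Summable.const_smul y (Summable.mul_right C'⁻¹ (Summable.mul_left B' ht3))
  have hsum2 : Summable (kterm (A + 1) B B' C C' x y) :=
    (Function.Injective.summable_iff he2 hvan2).mp (hS2.congr fun q => (hcomp2 q).symm)
  have htsum2 : ∑' p : ℕ × ℕ, kterm (A + 1) B B' C C' x y p
      = y • (B' * F2A (A + 1) B (B' + 1) C (C' + 1) x y * C'⁻¹) := by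
    have hsupp : Function.support (kterm (A + 1) B B' C C' x y)
        ⊆ Set.range (fun q : ℕ × ℕ => ((q.1, q.2 + 1) : ℕ × ℕ)) :=
      Function.support_subset_iff'.mpr hvan2
    rw [← Function.Injective.tsum_eq he2 hsupp]
    calc ∑' q : ℕ × ℕ, kterm (A + 1) B B' C C' x y (q.1, q.2 + 1)
        = ∑' q : ℕ × ℕ, y • (B' * term (A + 1) B (B' + 1) C (C' + 1) x y q * C'⁻¹) :=
          tsum_congr hcomp2
      _ = y • ∑' q : ℕ × ℕ, (B' * term (A + 1) B (B' + 1) C (C' + 1) x y q * C'⁻¹) :=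
          Summable.tsum_const_smul y (Summable.mul_right C'⁻¹ (Summable.mul_left B' ht3))
      _ = y • ((∑' q : ℕ × ℕ, B' * term (A + 1) B (B' + 1) C (C' + 1) x y q) * C'⁻¹) := by
          rw [Summable.tsum_mul_right C'⁻¹ (Summable.mul_left B' ht3)]
      _ = y • (B' * F2A (A + 1) B (B' + 1) C (C' + 1) x y * C'⁻¹) := by
          rw [Summable.tsum_mul_left B' ht3]
          rfl
  calc F2A (A + 1) B B' C C' x y
      = ∑' p : ℕ × ℕ, term (A + 1) B B' C C' x y p := rfl
    _ = ∑' p : ℕ × ℕ, ((term A B B' C C' x y p + hterm (A + 1) B B' C C' x y p)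
        + kterm (A + 1) B B' C C' x y p) := tsum_congr (term_split A B B' C C' x y)
    _ = (∑' p : ℕ × ℕ, (term A B B' C C' x y p + hterm (A + 1) B B' C C' x y p))
        + ∑' p : ℕ × ℕ, kterm (A + 1) B B' C C' x y p := Summable.tsum_add (hg.add hsum1) hsum2
    _ = ((∑' p : ℕ × ℕ, term A B B' C C' x y p)
        + ∑' p : ℕ × ℕ, hterm (A + 1) B B' C C' x y p)
        + ∑' p : ℕ × ℕ, kterm (A + 1) B B' C C' x y p := by rw [Summable.tsum_add hg hsum1]
    _ = F2A A B B' C C' x y + x • (B * F2A (A + 1) (B + 1) B' (C + 1) C' x y * C⁻¹)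
        + y • (B' * F2A (A + 1) B (B' + 1) C (C' + 1) x y * C'⁻¹) := by
        rw [htsum1, htsum2]
        rfl

end Main
end

section
/- Let A, B, C ∈ ℂ^{r×r} with C + kI invertible for all k ≥ 0 and AB = BA, and let s ≥ 0 be an integer. Then ₂F₁(A + sI, B; C; x) = ∑_{k=0}^{s} C(s,k) (B)_k x^k ₂F₁(A + kI, B + kI; C + kI; x) (C)_k^{-1}, for |x| < 1, where C(s,k) is the binomial coefficient. (Assume A + jI invertible for 0 ≤ j < s so the iterated contiguous relations apply.) -/
open Matrix Complex Finset

namespace Stmt8Aux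

variable {r : ℕ}

/-- The general term of the hypergeometric series. -/
noncomputable def term (A B C : Matrix (Fin r) (Fin r) ℂ) (x : ℂ) (n : ℕ) :
    Matrix (Fin r) (Fin r) ℂ :=
  ((n.factorial : ℂ)⁻¹ * x ^ n) • (poch A n * poch B n * (poch C n)⁻¹)

theorem F21_eq_tsum (A B C : Matrix (Fin r) (Fin r) ℂ) (x : ℂ) :
    F21 A B C x = ∑' n : ℕ, term A B C x n := rfl

theorem commute_poch {M A : Matrix (Fin r) (Fin r) ℂ} (h : Commute M A) (n : ℕ) :
    Commute M (poch A n) := by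
  induction n with
  | zero => exact Commute.one_right M
  | succ n ih =>
    rw [poch]
    exact ih.mul_right (h.add_right ((Commute.one_right M).smul_right _))

theorem shift_shift (A : Matrix (Fin r) (Fin r) ℂ) (j k : ℕ) :
    A + (j : ℂ) • 1 + (k : ℂ) • 1 = A + ((j + k : ℕ) : ℂ) • 1 := by
  push_cast
  rw [add_smul, add_assoc]

theorem shift_one (A : Matrix (Fin r) (Fin r) ℂ) (k : ℕ) :
    A + (1 : ℂ) • 1 + (k : ℂ) • 1 = A + ((k + 1 : ℕ) : ℂ) • 1 := by
  push_cast
  rw [add_smul, add_assoc, one_smul]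
  rw [add_comm ((1 : Matrix (Fin r) (Fin r) ℂ)) _]

theorem poch_succ_left (A : Matrix (Fin r) (Fin r) ℂ) (n : ℕ) :
    poch A (n + 1) = A * poch (A + (1 : ℂ) • 1) n := by
  induction n with
  | zero => simp [poch]
  | succ n ih =>
    have h1 : poch A (n + 1 + 1) = poch A (n + 1) * (A + ((n + 1 : ℕ) : ℂ) • 1) := rfl
    have h2 : poch (A + (1 : ℂ) • 1) (n + 1) =
        poch (A + (1 : ℂ) • 1) n * (A + (1 : ℂ) • 1 + (n : ℂ) • 1) := rfl
    rw [h1, ih, h2, mul_assoc, shift_one]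

theorem isUnit_poch {C : Matrix (Fin r) (Fin r) ℂ}
    (hC : ∀ k : ℕ, IsUnit (C + (k : ℂ) • 1)) (n : ℕ) : IsUnit (poch C n) := by
  induction n with
  | zero => exact isUnit_one
  | succ n ih => exact ih.mul (hC n)

/-- Difference identity `(A+I)_{m+1} - (A)_{m+1} = (m+1) (A+I)_m`. -/
theorem poch_diff (A : Matrix (Fin r) (Fin r) ℂ) (m : ℕ) :
    poch (A + (1 : ℂ) • 1) (m + 1) =
      poch A (m + 1) + ((m + 1 : ℕ) : ℂ) • poch (A + (1 : ℂ) • 1) m := by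
  have h2 : poch (A + (1 : ℂ) • 1) (m + 1) =
      poch (A + (1 : ℂ) • 1) m * (A + (1 : ℂ) • 1 + (m : ℂ) • 1) := rfl
  have hc : A * poch (A + (1 : ℂ) • 1) m = poch (A + (1 : ℂ) • 1) m * A :=
    (commute_poch ((Commute.refl A).add_right ((Commute.one_right A).smul_right _)) m).eq
  rw [h2, poch_succ_left, hc, shift_one, mul_add, mul_smul_comm, mul_one]

/-- Inverse of Pochhammer splits: `(C)_{m+1}⁻¹ = (C+I)_m⁻¹ C⁻¹`. -/
theorem poch_inv_succ (C : Matrix (Fin r) (Fin r) ℂ) (m : ℕ) :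
    (poch C (m + 1))⁻¹ = (poch (C + (1 : ℂ) • 1) m)⁻¹ * C⁻¹ := by
  rw [poch_succ_left, Matrix.mul_inv_rev]

section Summability

attribute [local instance] Matrix.linftyOpNormedRing Matrix.linftyOpNormedAlgebra
  Matrix.linftyOpNormedAddCommGroup

theorem norm_inv_le [Nonempty (Fin r)] {C : Matrix (Fin r) (Fin r) ℂ} {n : ℕ}
    (hu : IsUnit (C + (n : ℂ) • 1)) (hn : ‖C‖ < n) :
    ‖(C + (n : ℂ) • 1)⁻¹‖ ≤ ((n : ℝ) - ‖C‖)⁻¹ := by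
  set u := C + (n : ℂ) • 1 with hu_def
  have hpos : (0 : ℝ) < (n : ℝ) - ‖C‖ := sub_pos.mpr hn
  have hdet : IsUnit u.det := (Matrix.isUnit_iff_isUnit_det u).mp hu
  have h1 : u⁻¹ * u = 1 := Matrix.nonsing_inv_mul u hdet
  have h2 : (n : ℂ) • u⁻¹ = 1 - u⁻¹ * C := by
    rw [← h1, hu_def, mul_add, mul_smul_comm, mul_one]
    abel
  have h3 : (n : ℝ) * ‖u⁻¹‖ ≤ 1 + ‖u⁻¹‖ * ‖C‖ := by
    have := norm_smul ((n : ℂ)) (u⁻¹)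
    rw [h2] at this
    have h4 : ‖(1 : Matrix (Fin r) (Fin r) ℂ) - u⁻¹ * C‖ ≤ 1 + ‖u⁻¹‖ * ‖C‖ := by
      refine le_trans (norm_sub_le _ _) ?_
      rw [norm_one]
      exact add_le_add le_rfl (norm_mul_le _ _)
    calc (n : ℝ) * ‖u⁻¹‖ = ‖(n : ℂ)‖ * ‖u⁻¹‖ := by rw [Complex.norm_natCast]
    _ = ‖(1 : Matrix (Fin r) (Fin r) ℂ) - u⁻¹ * C‖ := this.symm
    _ ≤ 1 + ‖u⁻¹‖ * ‖C‖ := h4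
  have key : ‖u⁻¹‖ * ((n : ℝ) - ‖C‖) ≤ 1 := by nlinarith [norm_nonneg (u⁻¹)]
  calc ‖u⁻¹‖ = ‖u⁻¹‖ * ((n : ℝ) - ‖C‖) / ((n : ℝ) - ‖C‖) := by field_simp
  _ ≤ 1 / ((n : ℝ) - ‖C‖) := by gcongr
  _ = ((n : ℝ) - ‖C‖)⁻¹ := one_div _

theorem norm_poch_le [Nonempty (Fin r)] (A : Matrix (Fin r) (Fin r) ℂ) (n : ℕ) :
    ‖poch A n‖ ≤ ∏ k ∈ Finset.range n, (‖A‖ + k) := by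
  induction n with
  | zero => simp [poch]
  | succ n ih =>
    rw [poch, Finset.prod_range_succ]
    refine le_trans (norm_mul_le _ _) (mul_le_mul ih ?_ (norm_nonneg _) ?_)
    · refine le_trans (norm_add_le _ _) ?_
      rw [norm_smul, norm_one, Complex.norm_natCast, mul_one]
    · exact Finset.prod_nonneg fun k _ => by positivity

theorem norm_poch_inv_le [Nonempty (Fin r)] (C : Matrix (Fin r) (Fin r) ℂ) (n : ℕ) :
    ‖(poch C n)⁻¹‖ ≤ ∏ k ∈ Finset.range n, ‖(C + (k : ℂ) • 1)⁻¹‖ := by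
  induction n with
  | zero => simp [poch]
  | succ n ih =>
    rw [poch, Matrix.mul_inv_rev, Finset.prod_range_succ]
    refine le_trans (norm_mul_le _ _) ?_
    rw [mul_comm (∏ k ∈ Finset.range n, _) _]
    exact mul_le_mul le_rfl ih (norm_nonneg _) (norm_nonneg _)

set_option maxHeartbeats 1000000 in
theorem summable_term (A B C : Matrix (Fin r) (Fin r) ℂ)
    (hC : ∀ k : ℕ, IsUnit (C + (k : ℂ) • 1)) {x : ℂ} (hx : ‖x‖ < 1) :
    Summable (term A B C x) := by
  rcases Nat.eq_zero_or_pos r with hr | hr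
  · subst hr
    haveI : Subsingleton (Matrix (Fin 0) (Fin 0) ℂ) := ⟨fun a b => by ext i; exact i.elim0⟩
    have h : term A B C x = fun _ => (0 : Matrix (Fin 0) (Fin 0) ℂ) :=
      funext fun n => Subsingleton.elim _ _
    rw [h]; exact summable_zero
  haveI : Nonempty (Fin r) := Fin.pos_iff_nonempty.mp hr
  set a := ‖A‖ with ha_def
  set b := ‖B‖ with hb_def
  set c0 := ‖C‖ with hc0_def
  set c : ℕ → ℝ := fun k => ‖(C + (k : ℂ) • 1)⁻¹‖ with hc_def
  set g : ℕ → ℝ := fun n => ((n.factorial : ℝ)⁻¹ * ‖x‖ ^ n) *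
      ∏ k ∈ Finset.range n, ((a + k) * (b + k) * c k) with hg_def
  have hc_nonneg : ∀ k, 0 ≤ c k := fun k => norm_nonneg _
  have ha_nonneg : 0 ≤ a := norm_nonneg _
  have hb_nonneg : 0 ≤ b := norm_nonneg _
  have hg0 : ∀ n, 0 ≤ g n := by
    intro n
    refine mul_nonneg (by positivity) (Finset.prod_nonneg fun k _ => ?_)
    have h1 := hc_nonneg k
    positivity
  have hbound : ∀ n, ‖term A B C x n‖ ≤ g n := by
    intro n
    rw [term, norm_smul]
    have hs : ‖((n.factorial : ℂ))⁻¹ * x ^ n‖ = (n.factorial : ℝ)⁻¹ * ‖x‖ ^ n := by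
      rw [norm_mul, norm_inv, norm_pow, Complex.norm_natCast]
    rw [hs]
    refine mul_le_mul le_rfl ?_ (norm_nonneg _) (by positivity)
    have hPA := norm_poch_le A n
    have hPB := norm_poch_le B n
    have hPC := norm_poch_inv_le C n
    have hprodA : 0 ≤ ∏ k ∈ Finset.range n, (a + k) :=
      Finset.prod_nonneg fun k _ => by positivity
    have hprodB : 0 ≤ ∏ k ∈ Finset.range n, (b + k) :=
      Finset.prod_nonneg fun k _ => by positivity
    calc ‖poch A n * poch B n * (poch C n)⁻¹‖
        ≤ ‖poch A n‖ * ‖poch B n‖ * ‖(poch C n)⁻¹‖ :=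
          le_trans (norm_mul_le _ _)
            (mul_le_mul_of_nonneg_right (norm_mul_le _ _) (norm_nonneg _))
      _ ≤ (∏ k ∈ Finset.range n, (a + k)) * (∏ k ∈ Finset.range n, (b + k)) *
            (∏ k ∈ Finset.range n, c k) := by
          refine mul_le_mul (mul_le_mul hPA hPB (norm_nonneg _) hprodA) hPC
            (norm_nonneg _) (mul_nonneg hprodA hprodB)
      _ = ∏ k ∈ Finset.range n, ((a + k) * (b + k) * c k) := by
          rw [← Finset.prod_mul_distrib, ← Finset.prod_mul_distrib]
  have habs : 0 ≤ ‖x‖ := norm_nonneg x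
  have hl1 : ‖x‖ < (1 + ‖x‖) / 2 := by linarith
  have hl2 : (1 + ‖x‖) / 2 < 1 := by linarith
  have hg_succ : ∀ n : ℕ, g (n + 1) =
      g n * (‖x‖ / (n + 1) * ((a + n) * (b + n) * c n)) := by
    intro n
    have h1 : ((n : ℝ) + 1) ≠ 0 := by positivity
    have h2 : ((n.factorial : ℝ)) ≠ 0 := Nat.cast_ne_zero.mpr n.factorial_ne_zero
    rw [hg_def]
    simp only [Finset.prod_range_succ, Nat.factorial_succ, pow_succ]
    push_cast
    field_simp
  have hcb : ∀ᶠ n : ℕ in Filter.atTop, c n ≤ ((n : ℝ) - c0)⁻¹ := by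
    filter_upwards [Filter.eventually_gt_atTop ⌈c0⌉₊] with n hn
    have : c0 < (n : ℝ) := lt_of_le_of_lt (Nat.le_ceil c0) (by exact_mod_cast hn)
    exact norm_inv_le (hC n) this
  have hden1 : Filter.Tendsto (fun n : ℕ => (n : ℝ) + 1) Filter.atTop Filter.atTop :=
    Filter.tendsto_atTop_add_const_right _ 1 tendsto_natCast_atTop_atTop
  have hden2 : Filter.Tendsto (fun n : ℕ => (n : ℝ) - c0) Filter.atTop Filter.atTop := by
    simpa [sub_eq_add_neg] using
      Filter.tendsto_atTop_add_const_right Filter.atTop (-c0) tendsto_natCast_atTop_atTop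
  have h1 : Filter.Tendsto (fun n : ℕ => (a + n) / ((n : ℝ) + 1)) Filter.atTop (nhds 1) := by
    have ht : Filter.Tendsto (fun n : ℕ => 1 + (a - 1) / ((n : ℝ) + 1)) Filter.atTop
        (nhds (1 + 0)) := tendsto_const_nhds.add (Filter.Tendsto.const_div_atTop hden1 _)
    rw [add_zero] at ht
    refine ht.congr fun n => ?_
    have hne : ((n : ℝ) + 1) ≠ 0 := by positivity
    field_simp
    ring
  have h2 : Filter.Tendsto (fun n : ℕ => (b + n) * ((n : ℝ) - c0)⁻¹) Filter.atTop (nhds 1) := by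
    have ht : Filter.Tendsto (fun n : ℕ => 1 + (b + c0) / ((n : ℝ) - c0)) Filter.atTop
        (nhds (1 + 0)) := tendsto_const_nhds.add (Filter.Tendsto.const_div_atTop hden2 _)
    rw [add_zero] at ht
    refine ht.congr' ?_
    filter_upwards [Filter.eventually_gt_atTop ⌈c0⌉₊] with n hn
    have hne : ((n : ℝ) - c0) ≠ 0 :=
      ne_of_gt (sub_pos.mpr (lt_of_le_of_lt (Nat.le_ceil c0) (by exact_mod_cast hn)))
    field_simp
    ring
  have hq : Filter.Tendsto
      (fun n : ℕ => ‖x‖ / ((n : ℝ) + 1) * ((a + n) * (b + n) * ((n : ℝ) - c0)⁻¹))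
      Filter.atTop (nhds (‖x‖)) := by
    have ht := (tendsto_const_nhds (x := ‖x‖) (f := Filter.atTop (α := ℕ))).mul h1
      |>.mul h2
    rw [mul_one, mul_one] at ht
    refine ht.congr fun n => ?_
    rw [div_eq_mul_inv, div_eq_mul_inv]
    try ring
  have hev : ∀ᶠ n : ℕ in Filter.atTop,
      ‖g (n + 1)‖ ≤ (1 + ‖x‖) / 2 * ‖g n‖ := by
    filter_upwards [hcb, hq.eventually_le_const hl1, Filter.eventually_gt_atTop ⌈c0⌉₊]
      with n hn1 hn2 hn3
    have hpos : (0 : ℝ) < (n : ℝ) - c0 :=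
      sub_pos.mpr (lt_of_le_of_lt (Nat.le_ceil c0) (by exact_mod_cast hn3))
    rw [Real.norm_of_nonneg (hg0 _), Real.norm_of_nonneg (hg0 _), hg_succ n]
    have step : ‖x‖ / ((n : ℝ) + 1) * ((a + n) * (b + n) * c n) ≤
        (1 + ‖x‖) / 2 := by
      refine le_trans ?_ hn2
      have hcn := hc_nonneg n
      gcongr
    calc g n * (‖x‖ / ((n : ℝ) + 1) * ((a + n) * (b + n) * c n))
        ≤ g n * ((1 + ‖x‖) / 2) := mul_le_mul_of_nonneg_left step (hg0 n)
      _ = (1 + ‖x‖) / 2 * g n := mul_comm _ _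
  have hg_sum : Summable g := summable_of_ratio_norm_eventually_le hl2 hev
  exact Summable.of_norm_bounded hg_sum hbound

end Summability

theorem contiguous (A B C : Matrix (Fin r) (Fin r) ℂ)
    (hC : ∀ k : ℕ, IsUnit (C + (k : ℂ) • 1)) (hAB : A * B = B * A)
    {x : ℂ} (hx : ‖x‖ < 1) :
    F21 (A + (1 : ℂ) • 1) B C x = F21 A B C x +
      x • (B * F21 (A + (1 : ℂ) • 1) (B + (1 : ℂ) • 1) (C + (1 : ℂ) • 1) x * C⁻¹) := by
  classical
  have hC1 : ∀ k : ℕ, IsUnit (C + (1 : ℂ) • 1 + (k : ℂ) • 1) := fun k => by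
    rw [shift_one]; exact hC (k + 1)
  have hsum1 : Summable (term A B C x) := summable_term A B C hC hx
  have hsum2 : Summable (term (A + (1 : ℂ) • 1) (B + (1 : ℂ) • 1) (C + (1 : ℂ) • 1) x) :=
    summable_term _ _ _ hC1 hx
  set t' := term (A + (1 : ℂ) • 1) (B + (1 : ℂ) • 1) (C + (1 : ℂ) • 1) x with ht'_def
  let f : Matrix (Fin r) (Fin r) ℂ →+ Matrix (Fin r) (Fin r) ℂ :=
    AddMonoidHom.mk' (fun M => x • (B * M * C⁻¹)) (by
      intro M N
      show x • (B * (M + N) * C⁻¹) = x • (B * M * C⁻¹) + x • (B * N * C⁻¹)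
      rw [mul_add, add_mul, smul_add])
  have hfc : Continuous f := by
    show Continuous fun M : Matrix (Fin r) (Fin r) ℂ => x • (B * M * C⁻¹)
    exact ((continuous_const.matrix_mul continuous_id).matrix_mul continuous_const).const_smul x
  set v : ℕ → Matrix (Fin r) (Fin r) ℂ := fun n => Nat.casesOn n 0 (fun m => f (t' m))
    with hv_def
  have hv_sum : Summable v := by
    rw [← summable_nat_add_iff 1]
    exact (hsum2.map f hfc : Summable (f ∘ t'))
  have key : ∀ n, term (A + (1 : ℂ) • 1) B C x n = term A B C x n + v n := by
    intro n
    cases n with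
    | zero =>
      show term (A + (1 : ℂ) • 1) B C x 0 = term A B C x 0 + 0
      rw [add_zero, term, term]
      simp [poch]
    | succ m =>
      have hBP : B * poch (A + (1 : ℂ) • 1) m = poch (A + (1 : ℂ) • 1) m * B :=
        (commute_poch ((show Commute B A from hAB.symm).add_right
          ((Commute.one_right B).smul_right _)) m).eq
      have hprod : B * (poch (A + (1 : ℂ) • 1) m * poch (B + (1 : ℂ) • 1) m *
            (poch (C + (1 : ℂ) • 1) m)⁻¹) * C⁻¹ =
          poch (A + (1 : ℂ) • 1) m * poch B (m + 1) * (poch C (m + 1))⁻¹ := by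
        rw [poch_succ_left B m, poch_inv_succ C m]
        simp only [← mul_assoc]
        rw [hBP]
      have hfac : ((Nat.factorial (m + 1) : ℂ))⁻¹ * ((m : ℂ) + 1) = ((Nat.factorial m : ℂ))⁻¹ := by
        have h1 : ((Nat.factorial m : ℂ)) ≠ 0 := Nat.cast_ne_zero.mpr m.factorial_ne_zero
        have h2 : ((m : ℂ) + 1) ≠ 0 := by
          exact_mod_cast Nat.cast_add_one_ne_zero (R := ℂ) m
        rw [Nat.factorial_succ]
        push_cast
        field_simp
      show term (A + (1 : ℂ) • 1) B C x (m + 1) = term A B C x (m + 1) + f (t' m)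
      rw [term, term, ht'_def, term, poch_diff]
      show _ = _ + x • (B * (((Nat.factorial m : ℂ)⁻¹ * x ^ m) •
        (poch (A + (1 : ℂ) • 1) m * poch (B + (1 : ℂ) • 1) m *
          (poch (C + (1 : ℂ) • 1) m)⁻¹)) * C⁻¹)
      rw [Matrix.mul_smul, Matrix.smul_mul, smul_smul, hprod]
      rw [add_mul, add_mul, smul_add, smul_mul_assoc, smul_mul_assoc, smul_smul]
      congr 1
      congr 1
      have h1 : ((Nat.factorial m : ℂ)) ≠ 0 := Nat.cast_ne_zero.mpr m.factorial_ne_zero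
      have h2 : ((m : ℂ) + 1) ≠ 0 := Nat.cast_add_one_ne_zero m
      rw [Nat.factorial_succ]
      push_cast
      field_simp
      ring
  calc F21 (A + (1 : ℂ) • 1) B C x = ∑' n, (term A B C x n + v n) := tsum_congr key
    _ = (∑' n, term A B C x n) + ∑' n, v n := Summable.tsum_add hsum1 hv_sum
    _ = F21 A B C x + (v 0 + ∑' n, v (n + 1)) := by
        rw [Summable.tsum_eq_zero_add hv_sum, ← F21_eq_tsum]
    _ = F21 A B C x + ∑' n, f (t' n) := by rw [show v 0 = 0 from rfl, zero_add]
    _ = F21 A B C x + f (∑' n, t' n) := by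
        rw [hsum2.map_tsum f hfc]
    _ = F21 A B C x + x • (B * F21 (A + (1 : ℂ) • 1) (B + (1 : ℂ) • 1) (C + (1 : ℂ) • 1) x
          * C⁻¹) := rfl

theorem pascal_sum {M : Type*} [AddCommGroup M] [Module ℂ M] (x : ℂ) (s : ℕ) (T : ℕ → M) :
    ∑ k ∈ Finset.range (s + 2), (((s + 1).choose k : ℂ) * x ^ k) • T k
      = ∑ k ∈ Finset.range (s + 1), ((s.choose k : ℂ) * x ^ k) • T k
        + ∑ k ∈ Finset.range (s + 1), ((s.choose k : ℂ) * x ^ (k + 1)) • T (k + 1) := by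
  rw [Finset.sum_range_succ' _ (s + 1)]
  have h : ∀ k, (((s + 1).choose (k + 1) : ℂ) * x ^ (k + 1)) • T (k + 1)
      = ((s.choose k : ℂ) * x ^ (k + 1)) • T (k + 1)
        + ((s.choose (k + 1) : ℂ) * x ^ (k + 1)) • T (k + 1) := by
    intro k
    rw [Nat.choose_succ_succ]
    push_cast
    rw [add_mul, add_smul]
  rw [Finset.sum_congr rfl fun k _ => h k, Finset.sum_add_distrib]
  rw [Finset.sum_range_succ (fun k => ((s.choose (k + 1) : ℂ) * x ^ (k + 1)) • T (k + 1)) s]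
  rw [Nat.choose_succ_self]
  rw [Finset.sum_range_succ' (fun k => ((s.choose k : ℂ) * x ^ k) • T k) s]
  simp only [Nat.choose_zero_right, Nat.cast_one, Nat.cast_zero, pow_zero, one_mul, zero_mul,
    zero_smul, add_zero, Nat.cast_ofNat]
  abel

theorem main_aux (s : ℕ) : ∀ (A B C : Matrix (Fin r) (Fin r) ℂ),
    (∀ k : ℕ, IsUnit (C + (k : ℂ) • 1)) → A * B = B * A → ∀ {x : ℂ}, ‖x‖ < 1 →
    F21 (A + (s : ℂ) • 1) B C x =
      ∑ k ∈ Finset.range (s + 1), ((s.choose k : ℂ) * x ^ k) •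
        (poch B k * F21 (A + (k : ℂ) • 1) (B + (k : ℂ) • 1) (C + (k : ℂ) • 1) x *
          (poch C k)⁻¹) := by
  induction s with
  | zero =>
    intro A B C hC hAB x hx
    simp [poch]
  | succ s ih =>
    intro A B C hC hAB x hx
    have hC1 : ∀ k : ℕ, IsUnit (C + (1 : ℂ) • 1 + (k : ℂ) • 1) := fun k => by
      rw [shift_one]; exact hC (k + 1)
    have hAB' : (A + (s : ℂ) • 1) * B = B * (A + (s : ℂ) • 1) := by
      rw [add_mul, mul_add, hAB, smul_mul_assoc, mul_smul_comm, one_mul, mul_one]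
    have hAB1 : (A + (1 : ℂ) • 1) * (B + (1 : ℂ) • 1) = (B + (1 : ℂ) • 1) * (A + (1 : ℂ) • 1) := by
      simp only [add_mul, mul_add, hAB, smul_mul_assoc, mul_smul_comm, one_mul, mul_one,
        one_smul]
      abel
    have e1 : A + ((s + 1 : ℕ) : ℂ) • 1 = A + (s : ℂ) • 1 + (1 : ℂ) • 1 := by
      have := shift_shift A s 1
      rw [Nat.cast_one] at this
      exact this.symm
    have e2 : A + (s : ℂ) • 1 + (1 : ℂ) • 1 = A + (1 : ℂ) • 1 + (s : ℂ) • 1 := by abel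
    have step := contiguous (A + (s : ℂ) • 1) B C hC hAB' hx
    rw [e1, step, e2]
    rw [ih A B C hC hAB hx, ih (A + (1 : ℂ) • 1) (B + (1 : ℂ) • 1) (C + (1 : ℂ) • 1) hC1 hAB1 hx]
    rw [Finset.mul_sum, Finset.sum_mul, Finset.smul_sum]
    have hterm : ∀ k ∈ Finset.range (s + 1),
        x • (B * (((s.choose k : ℂ) * x ^ k) •
          (poch (B + (1 : ℂ) • 1) k *
            F21 (A + (1 : ℂ) • 1 + (k : ℂ) • 1) (B + (1 : ℂ) • 1 + (k : ℂ) • 1)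
              (C + (1 : ℂ) • 1 + (k : ℂ) • 1) x *
            (poch (C + (1 : ℂ) • 1) k)⁻¹)) * C⁻¹)
        = ((s.choose k : ℂ) * x ^ (k + 1)) •
          (poch B (k + 1) *
            F21 (A + ((k + 1 : ℕ) : ℂ) • 1) (B + ((k + 1 : ℕ) : ℂ) • 1)
              (C + ((k + 1 : ℕ) : ℂ) • 1) x *
            (poch C (k + 1))⁻¹) := by
      intro k _
      rw [shift_one A k, shift_one B k, shift_one C k]
      rw [Matrix.mul_smul, Matrix.smul_mul, smul_smul]
      rw [poch_succ_left B k, poch_inv_succ C k]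
      rw [mul_comm x ((s.choose k : ℂ) * x ^ k), mul_assoc, ← pow_succ]
      simp only [mul_assoc]
    rw [Finset.sum_congr rfl hterm]
    exact (pascal_sum x s _).symm

end Stmt8Aux

/-- Binomial-type recursion formula for ₂F₁. -/
theorem stmt_8 {r : ℕ} (A B C : Matrix (Fin r) (Fin r) ℂ) (s : ℕ)
    (hC : ∀ k : ℕ, IsUnit (C + (k : ℂ) • 1)) (hAB : A * B = B * A)
    (hA : ∀ j < s, IsUnit (A + (j : ℂ) • 1))
    (x : ℂ) (hx : ‖x‖ < 1) :
    F21 (A + (s : ℂ) • 1) B C x =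
      ∑ k ∈ Finset.range (s + 1), ((s.choose k : ℂ) * x ^ k) •
        (poch B k * F21 (A + (k : ℂ) • 1) (B + (k : ℂ) • 1) (C + (k : ℂ) • 1) x *
          (poch C k)⁻¹) := by
  exact Stmt8Aux.main_aux s A B C hC hAB hx
end
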